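/- arXiv:1405.2009 — 5 statements merged into one kernel-verified Lean document; each statement's English description precedes it below -/
import Mathlib

section
/- Let R be a local topological ring such that the unit group R^× is open in R and is a topological group under the subspace topology. Suppose T₁ and T₂ are two assignments of a topology to the set X(R) of R-points of every locally of finite type R-scheme X, each satisfying: (ii) for every n ≥ 0 the canonical bijection 𝔸ⁿ(R) = Rⁿ is a homeomorphism; (iii) every closed immersion X ↪ X′ induces a topological embedding X(R) ↪ X′(R); (iv) every open immersion X ↪ X′ induces an open topological embedding X(R) ↪ X′(R). Then T₁ = T₂, i.e., for every locally of finite type R-scheme X the two topologies on X(R) coincide. -/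
/-!
STATEMENT 0: Uniqueness of the topologization of rational points.
If two assignments of topologies to `X(R)`, for locally of finite type `R`-schemes `X`,
both satisfy (ii) `𝔸ⁿ(R) = Rⁿ` is a homeomorphism, (iii) closed immersions induce
topological embeddings, and (iv) open immersions induce open topological embeddings,
then the two assignments coincide.
-/

open AlgebraicGeometry CategoryTheory CategoryTheory.Limits Topology

noncomputable section

/-- `Spec R`, as a scheme, for a commutative ring `R`. -/
abbrev SpecR (R : Type) [CommRing R] : Scheme := Spec (CommRingCat.of R)

/-- The set of `R`-points of a scheme `X` over `Spec R` with structure morphism `f`,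
i.e. the set of sections of `f`. -/
def Pts {R : Type} [CommRing R] {X : Scheme} (f : X ⟶ SpecR R) : Type :=
  { s : SpecR R ⟶ X // s ≫ f = 𝟙 (SpecR R) }

/-- The map on `R`-points induced by a morphism `g` of schemes over `Spec R`. -/
def Pts.map {R : Type} [CommRing R] {X X' : Scheme} {f : X ⟶ SpecR R} {f' : X' ⟶ SpecR R}
    (g : X ⟶ X') (w : g ≫ f' = f) (s : Pts f) : Pts f' :=
  ⟨s.1 ≫ g, by rw [Category.assoc, w, s.2]⟩

/-- Affine `n`-space over `R`. -/
abbrev AffineN (R : Type) [CommRing R] (n : ℕ) : Scheme :=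
  Spec (CommRingCat.of (MvPolynomial (Fin n) R))

/-- The structure morphism of affine `n`-space over `R`. -/
def AffineNStr (R : Type) [CommRing R] (n : ℕ) : AffineN R n ⟶ SpecR R :=
  Spec.map (CommRingCat.ofHom (algebraMap R (MvPolynomial (Fin n) R)))

/-- The canonical identification `𝔸ⁿ(R) = Rⁿ`, sending a section to its coordinates. -/
def affineCoords (R : Type) [CommRing R] (n : ℕ) (s : Pts (AffineNStr R n)) : Fin n → R :=
  fun i => Spec.preimage s.1 (MvPolynomial.X i)

/-- An assignment of topologies to sets of rational points over `R`, satisfying only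
the axioms (ii), (iii) and (iv). -/
structure WeakPointsTopology (R : Type) [CommRing R] [TopologicalSpace R] : Type 1 where
  /-- the topology on `X(R)` -/
  top : ∀ {X : Scheme} (f : X ⟶ SpecR R), LocallyOfFiniteType f → TopologicalSpace (Pts f)
  /-- (ii) the canonical bijection `𝔸ⁿ(R) = Rⁿ` is a homeomorphism -/
  affine_homeo : ∀ (n : ℕ) (h : LocallyOfFiniteType (AffineNStr R n)),
      letI := top (AffineNStr R n) h
      IsHomeomorph (affineCoords R n)
  /-- (iii) closed immersions induce topological embeddings on `R`-points -/
  closedImmersion_isEmbedding : ∀ {X X' : Scheme} {f : X ⟶ SpecR R} {f' : X' ⟶ SpecR R}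
      (hf : LocallyOfFiniteType f) (hf' : LocallyOfFiniteType f') (g : X ⟶ X')
      (w : g ≫ f' = f), IsClosedImmersion g →
      letI := top f hf
      letI := top f' hf'
      IsEmbedding (Pts.map g w)
  /-- (iv) open immersions induce open topological embeddings on `R`-points -/
  openImmersion_isOpenEmbedding : ∀ {X X' : Scheme} {f : X ⟶ SpecR R} {f' : X' ⟶ SpecR R}
      (hf : LocallyOfFiniteType f) (hf' : LocallyOfFiniteType f') (g : X ⟶ X')
      (w : g ≫ f' = f), IsOpenImmersion g →
      letI := top f hf
      letI := top f' hf'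
      IsOpenEmbedding (Pts.map g w)

/-- The canonical algebra map into a polynomial ring is of finite type. -/
lemma auxFT (R : Type) [CommRing R] (n : ℕ) :
    RingHom.FiniteType (algebraMap R (MvPolynomial (Fin n) R)) := by
  have h : (algebraMap R (MvPolynomial (Fin n) R)).toAlgebra =
      (inferInstance : Algebra R (MvPolynomial (Fin n) R)) :=
    Algebra.algebra_ext _ _ fun r => rfl
  show @Algebra.FiniteType R (MvPolynomial (Fin n) R) _ _
    (algebraMap R (MvPolynomial (Fin n) R)).toAlgebra
  rw [h]
  infer_instance

/-- Two weak points-topologies agree on affine schemes of finite type over `R`. -/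
lemma affine_case {R : Type} [CommRing R] [TopologicalSpace R]
    (T₁ T₂ : WeakPointsTopology R) {S : CommRingCat}
    (f : Spec S ⟶ SpecR R) (hf : LocallyOfFiniteType f) :
    T₁.top f hf = T₂.top f hf := by
  have hft : RingHom.FiniteType (Spec.preimage f).hom := by
    rw [← HasRingHomProperty.Spec_iff (P := @LocallyOfFiniteType), Spec.map_preimage]
    exact hf
  letI : Algebra R S := (Spec.preimage f).hom.toAlgebra
  have hAft : Algebra.FiniteType R S := hft
  obtain ⟨n, ψ, hψ⟩ := Algebra.FiniteType.iff_quotient_mvPolynomial''.mp hAft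
  let g : Spec S ⟶ AffineN R n := Spec.map (CommRingCat.ofHom ψ.toRingHom)
  have hg : IsClosedImmersion g := IsClosedImmersion.spec_of_surjective _ hψ
  have w : g ≫ AffineNStr R n = f := by
    show Spec.map _ ≫ Spec.map _ = f
    rw [← Spec.map_comp, ← Spec.map_preimage f]
    congr 1
    exact CommRingCat.hom_ext (AlgHom.comp_algebraMap ψ)
  have hAn : LocallyOfFiniteType (AffineNStr R n) :=
    HasRingHomProperty.Spec_iff.mpr (auxFT R n)
  have i₁ : T₁.top (AffineNStr R n) hAn =
      TopologicalSpace.induced (affineCoords R n) inferInstance := by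
    letI := T₁.top (AffineNStr R n) hAn
    exact (T₁.affine_homeo n hAn).isInducing.eq_induced
  have i₂ : T₂.top (AffineNStr R n) hAn =
      TopologicalSpace.induced (affineCoords R n) inferInstance := by
    letI := T₂.top (AffineNStr R n) hAn
    exact (T₂.affine_homeo n hAn).isInducing.eq_induced
  have j₁ : T₁.top f hf =
      TopologicalSpace.induced (Pts.map g w) (T₁.top (AffineNStr R n) hAn) := by
    letI := T₁.top f hf
    letI := T₁.top (AffineNStr R n) hAn
    exact (T₁.closedImmersion_isEmbedding hf hAn g w hg).toIsInducing.eq_induced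
  have j₂ : T₂.top f hf =
      TopologicalSpace.induced (Pts.map g w) (T₂.top (AffineNStr R n) hAn) := by
    letI := T₂.top f hf
    letI := T₂.top (AffineNStr R n) hAn
    exact (T₂.closedImmersion_isEmbedding hf hAn g w hg).toIsInducing.eq_induced
  rw [j₁, j₂, i₁, i₂]

/-- Any two assignments of topologies to the sets of `R`-points of locally of finite type
`R`-schemes, each satisfying (ii), (iii) and (iv), coincide. -/
theorem statement_0 (R : Type) [CommRing R] [TopologicalSpace R] [IsTopologicalRing R]
    [IsLocalRing R]
    (hunit : IsOpen {x : R | IsUnit x})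
    (hinv : ContinuousOn (fun x : R => Ring.inverse x) {x : R | IsUnit x})
    (T₁ T₂ : WeakPointsTopology R) :
    ∀ {X : Scheme} (f : X ⟶ SpecR R) (hf : LocallyOfFiniteType f),
      T₁.top f hf = T₂.top f hf := by
  intro X f hf
  refine TopologicalSpace.ext_nhds fun s => ?_
  haveI := hf
  haveI : IsLocalRing ↑(CommRingCat.of R) := ‹IsLocalRing R›
  let x := s.1.base (IsLocalRing.closedPoint R)
  let ι : X.affineCover.X (X.affineCover.idx x) ⟶ X := X.affineCover.f (X.affineCover.idx x)
  have hrange : Set.range s.1.base ⊆ Set.range ι.base := by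
    rintro _ ⟨y, rfl⟩
    exact ((IsLocalRing.specializes_closedPoint y).map s.1.base.hom.2).mem_open
      ι.isOpenEmbedding.isOpen_range (X.affineCover.covers x)
  let l : SpecR R ⟶ X.affineCover.X (X.affineCover.idx x) := IsOpenImmersion.lift ι s.1 hrange
  have hl : l ≫ ι = s.1 := IsOpenImmersion.lift_fac ι s.1 hrange
  have hfU : LocallyOfFiniteType (ι ≫ f) := inferInstance
  let s₀ : Pts (ι ≫ f) := ⟨l, by rw [← Category.assoc, hl, s.2]⟩
  have hs : Pts.map ι rfl s₀ = s := Subtype.ext hl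
  have n₁ : Filter.map (Pts.map ι rfl) (@nhds _ (T₁.top (ι ≫ f) hfU) s₀) =
      @nhds _ (T₁.top f hf) (Pts.map ι rfl s₀) := by
    letI := T₁.top (ι ≫ f) hfU
    letI := T₁.top f hf
    exact (T₁.openImmersion_isOpenEmbedding hfU hf ι rfl inferInstance).map_nhds_eq s₀
  have n₂ : Filter.map (Pts.map ι rfl) (@nhds _ (T₂.top (ι ≫ f) hfU) s₀) =
      @nhds _ (T₂.top f hf) (Pts.map ι rfl s₀) := by
    letI := T₂.top (ι ≫ f) hfU
    letI := T₂.top f hf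
    exact (T₂.openImmersion_isOpenEmbedding hfU hf ι rfl inferInstance).map_nhds_eq s₀
  have key : T₁.top (ι ≫ f) hfU = T₂.top (ι ≫ f) hfU := affine_case T₁ T₂ _ hfU
  rw [← hs, ← n₁, ← n₂, key]

end
end

section
/- Let 𝔬 be the ring of integers of a nonarchimedean local field (i.e., 𝔬 is a complete discrete valuation ring with finite residue field), endowed with its valuation topology, and fix a topologization of rational points over 𝔬. Then 𝔬 is proper-closed: for every proper morphism f : X → Y of locally of finite type 𝔬-schemes, the induced map f(𝔬) : X(𝔬) → Y(𝔬) is closed. -/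
open AlgebraicGeometry CategoryTheory CategoryTheory.Limits Topology

noncomputable section

/-- A topologization of rational points over `R`: an assignment of a topology to `X(R)`
for every locally of finite type `R`-scheme `X`, satisfying (i)–(iv). -/
structure PointsTopology (R : Type) [CommRing R] [TopologicalSpace R] : Type 1 where
  /-- the topology on `X(R)` -/
  top : ∀ {X : Scheme} (f : X ⟶ SpecR R), LocallyOfFiniteType f → TopologicalSpace (Pts f)
  /-- (i) every `R`-morphism induces a continuous map on `R`-points -/
  continuous_map : ∀ {X X' : Scheme} {f : X ⟶ SpecR R} {f' : X' ⟶ SpecR R}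
      (hf : LocallyOfFiniteType f) (hf' : LocallyOfFiniteType f') (g : X ⟶ X') (w : g ≫ f' = f),
      letI := top f hf
      letI := top f' hf'
      Continuous (Pts.map g w)
  /-- (ii) the canonical bijection `𝔸ⁿ(R) = Rⁿ` is a homeomorphism -/
  affine_homeo : ∀ (n : ℕ) (h : LocallyOfFiniteType (AffineNStr R n)),
      letI := top (AffineNStr R n) h
      IsHomeomorph (affineCoords R n)
  /-- (iii) closed immersions induce topological embeddings on `R`-points -/
  closedImmersion_isEmbedding : ∀ {X X' : Scheme} {f : X ⟶ SpecR R} {f' : X' ⟶ SpecR R}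
      (hf : LocallyOfFiniteType f) (hf' : LocallyOfFiniteType f') (g : X ⟶ X')
      (w : g ≫ f' = f), IsClosedImmersion g →
      letI := top f hf
      letI := top f' hf'
      IsEmbedding (Pts.map g w)
  /-- (iv) open immersions induce open topological embeddings on `R`-points -/
  openImmersion_isOpenEmbedding : ∀ {X X' : Scheme} {f : X ⟶ SpecR R} {f' : X' ⟶ SpecR R}
      (hf : LocallyOfFiniteType f) (hf' : LocallyOfFiniteType f') (g : X ⟶ X')
      (w : g ≫ f' = f), IsOpenImmersion g →
      letI := top f hf
      letI := top f' hf'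
      IsOpenEmbedding (Pts.map g w)

/-- `R` is étale-open: étale morphisms of locally of finite type `R`-schemes
induce open maps on `R`-points. -/
def EtaleOpen {R : Type} [CommRing R] [TopologicalSpace R] (T : PointsTopology R) : Prop :=
  ∀ {X Y : Scheme} {f : X ⟶ SpecR R} {g : Y ⟶ SpecR R}
    (hf : LocallyOfFiniteType f) (hg : LocallyOfFiniteType g) (φ : X ⟶ Y) (w : φ ≫ g = f),
    IsEtale φ →
    letI := T.top f hf
    letI := T.top g hg
    IsOpenMap (Pts.map φ w)

/-- `R` is proper-closed: proper morphisms of locally of finite type `R`-schemes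
induce closed maps on `R`-points. -/
def ProperClosed {R : Type} [CommRing R] [TopologicalSpace R] (T : PointsTopology R) : Prop :=
  ∀ {X Y : Scheme} {f : X ⟶ SpecR R} {g : Y ⟶ SpecR R}
    (hf : LocallyOfFiniteType f) (hg : LocallyOfFiniteType g) (φ : X ⟶ Y) (w : φ ≫ g = f),
    IsProper φ →
    letI := T.top f hf
    letI := T.top g hg
    IsClosedMap (Pts.map φ w)

/-- `R` is finite-closed: finite morphisms of locally of finite type `R`-schemes
induce closed maps on `R`-points. -/
def FiniteClosed {R : Type} [CommRing R] [TopologicalSpace R] (T : PointsTopology R) : Prop :=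
  ∀ {X Y : Scheme} {f : X ⟶ SpecR R} {g : Y ⟶ SpecR R}
    (hf : LocallyOfFiniteType f) (hg : LocallyOfFiniteType g) (φ : X ⟶ Y) (w : φ ≫ g = f),
    IsFinite φ →
    letI := T.top f hf
    letI := T.top g hg
    IsClosedMap (Pts.map φ w)








namespace Statement6Aux

variable {O : Type} [CommRing O]

local notation "mI" => IsLocalRing.maximalIdeal O

/-- finiteness from finite fibers -/
lemma finite_of_fibers {α β : Type} (f : α → β) [Finite β] (h : ∀ b, Finite {x // f x = b}) :
    Finite α := by
  haveI := h; exact Finite.of_equiv _ (Equiv.sigmaFiberEquiv f)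

lemma finite_quot_pow [IsDomain O] [IsDiscreteValuationRing O]
    [Finite (IsLocalRing.ResidueField O)] (n : ℕ) :
    Finite (O ⧸ (mI ^ n : Ideal O)) := by
  induction n with
  | zero =>
      have : ((mI ^ 0 : Ideal O)) = ⊤ := by simp
      haveI : Subsingleton (O ⧸ (mI ^ 0 : Ideal O)) := Ideal.Quotient.subsingleton_iff.mpr this
      exact Finite.of_subsingleton
  | succ n ih =>
      haveI := ih
      haveI : Finite (O ⧸ (mI : Ideal O)) := inferInstanceAs (Finite (IsLocalRing.ResidueField O))
      obtain ⟨ϖ, hϖ⟩ := IsDiscreteValuationRing.exists_irreducible O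
      have hm : (mI : Ideal O) = Ideal.span {ϖ} :=
        (IsDiscreteValuationRing.irreducible_iff_uniformizer ϖ).mp hϖ
      set I : Ideal O := mI ^ (n + 1) with hI
      have hle : I ≤ mI ^ n := Ideal.pow_le_pow_right (Nat.le_succ n)
      -- the image of m^n in O/I is finite
      set Jq : Ideal (O ⧸ I) := (mI ^ n).map (Ideal.Quotient.mk I) with hJq
      -- linear map O → O⧸I, x ↦ mk (ϖ^n * x)
      let ℓ : O →ₗ[O] (O ⧸ I) :=
        { toFun := fun x => Ideal.Quotient.mk I (ϖ ^ n * x)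
          map_add' := by intro a b; simp [mul_add]
          map_smul' := by
            intro a b
            show Ideal.Quotient.mk I (ϖ ^ n * (a * b)) = a • Ideal.Quotient.mk I (ϖ ^ n * b)
            rw [← Ideal.Quotient.mk_eq_mk, ← Ideal.Quotient.mk_eq_mk, ← Submodule.Quotient.mk_smul]
            congr 1
            simp only [smul_eq_mul]
            ring }
      have hker : (mI : Ideal O) ≤ LinearMap.ker ℓ := by
        intro x hx
        rw [hm, Ideal.mem_span_singleton] at hx
        obtain ⟨c, rfl⟩ := hx
        show Ideal.Quotient.mk I (ϖ ^ n * (ϖ * c)) = 0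
        rw [Ideal.Quotient.eq_zero_iff_mem]
        have : ϖ ^ n * (ϖ * c) = ϖ ^ (n+1) * c := by ring
        rw [this, hI, hm, Ideal.span_singleton_pow, Ideal.mem_span_singleton]
        exact Dvd.intro c rfl
      let ℓq : (O ⧸ (mI : Ideal O)) →ₗ[O] (O ⧸ I) := Submodule.liftQ _ ℓ hker
      have hJset : (Jq : Set (O ⧸ I)) = Set.range ℓq := by
        ext h; constructor
        · intro hh
          rw [hJq] at hh
          rw [SetLike.mem_coe] at hh
          rw [Ideal.mem_map_iff_of_surjective _ Ideal.Quotient.mk_surjective] at hh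
          obtain ⟨w, hw, rfl⟩ := hh
          rw [hm, Ideal.span_singleton_pow, Ideal.mem_span_singleton] at hw
          obtain ⟨c, rfl⟩ := hw
          exact ⟨Submodule.Quotient.mk c, rfl⟩
        · rintro ⟨y, rfl⟩
          obtain ⟨c, rfl⟩ := Submodule.Quotient.mk_surjective _ y
          show Ideal.Quotient.mk I (ϖ ^ n * c) ∈ Jq
          apply Ideal.mem_map_of_mem
          rw [hm, Ideal.span_singleton_pow, Ideal.mem_span_singleton]
          exact Dvd.intro c rfl
      have hJfin : Finite ↥Jq := by
        have : (Jq : Set (O ⧸ I)).Finite := by rw [hJset]; exact Set.finite_range _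
        exact this.to_subtype
      -- now count fibers of the factor map
      let q : (O ⧸ I) →+* (O ⧸ (mI ^ n : Ideal O)) := Ideal.Quotient.factor hle
      apply finite_of_fibers q
      intro b
      obtain ⟨x₀, hx₀⟩ := Ideal.Quotient.mk_surjective (I := (mI ^ n : Ideal O)) b
      have hkerq : ∀ z : O ⧸ I, q z = 0 → z ∈ Jq := by
        intro z hz
        obtain ⟨w, rfl⟩ := Ideal.Quotient.mk_surjective (I := I) z
        rw [show q (Ideal.Quotient.mk I w) = Ideal.Quotient.mk _ w from
          Ideal.Quotient.factor_mk hle w, Ideal.Quotient.eq_zero_iff_mem] at hz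
        exact Ideal.mem_map_of_mem _ hz
      apply Finite.of_injective (β := ↥Jq)
        (fun x => ⟨x.1 - Ideal.Quotient.mk I x₀, by
          apply hkerq
          rw [map_sub, x.2, show q (Ideal.Quotient.mk I x₀) = Ideal.Quotient.mk _ x₀ from
            Ideal.Quotient.factor_mk hle x₀, hx₀, sub_self]⟩)
      intro a b hab
      have := congrArg Subtype.val hab
      simp only at this
      exact Subtype.ext (by
        have h2 : a.1 - Ideal.Quotient.mk I x₀ = b.1 - Ideal.Quotient.mk I x₀ := this
        exact sub_left_injective h2)

end Statement6Aux

section Chunk2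
open Filter

variable {O : Type} [CommRing O] [TopologicalSpace O] [IsTopologicalRing O]

namespace Statement6Aux

lemma isOpen_pow_maximalIdeal [IsLocalRing O]
    (hval : (nhds (0 : O)).HasBasis (fun _ : ℕ => True)
      (fun n => ((IsLocalRing.maximalIdeal O ^ n : Ideal O) : Set O))) (n : ℕ) :
    IsOpen ((IsLocalRing.maximalIdeal O ^ n : Ideal O) : Set O) := by
  exact AddSubgroup.isOpen_of_mem_nhds
    (Submodule.toAddSubgroup (IsLocalRing.maximalIdeal O ^ n)) (hval.mem_of_mem trivial)

lemma t2space_of_val [IsDomain O] [IsDiscreteValuationRing O]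
    (hval : (nhds (0 : O)).HasBasis (fun _ : ℕ => True)
      (fun n => ((IsLocalRing.maximalIdeal O ^ n : Ideal O) : Set O))) :
    T2Space O := by
  constructor
  intro x y hxy
  have hbot : ⨅ i : ℕ, (IsLocalRing.maximalIdeal O) ^ i = ⊥ :=
    Ideal.iInf_pow_eq_bot_of_isLocalRing _ (IsLocalRing.maximalIdeal.isMaximal O).ne_top
  have : ∃ n, x - y ∉ (IsLocalRing.maximalIdeal O ^ n : Ideal O) := by
    by_contra h
    push_neg at h
    have : x - y ∈ (⊥ : Ideal O) := hbot ▸ (Submodule.mem_iInf _).mpr h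
    rw [Ideal.mem_bot, sub_eq_zero] at this
    exact hxy this
  obtain ⟨n, hn⟩ := this
  set S := ((IsLocalRing.maximalIdeal O ^ n : Ideal O) : Set O)
  have hS : IsOpen S := isOpen_pow_maximalIdeal hval n
  have h0 : (0 : O) ∈ S := by
    show (0 : O) ∈ (IsLocalRing.maximalIdeal O ^ n : Ideal O)
    exact Submodule.zero_mem _
  refine ⟨(x + ·) '' S, (y + ·) '' S, (Homeomorph.addLeft x).isOpenMap _ hS,
    (Homeomorph.addLeft y).isOpenMap _ hS, ⟨0, h0, by simp⟩,
    ⟨0, h0, by simp⟩, ?_⟩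
  rw [Set.disjoint_left]
  rintro z ⟨u, hu, rfl⟩ ⟨v, hv, hz⟩
  apply hn
  have : x - y = v - u := by linear_combination hz.symm
  rw [this]
  exact sub_mem hv hu

lemma compactSpace_of_val [IsDomain O] [IsDiscreteValuationRing O]
    [IsAdicComplete (IsLocalRing.maximalIdeal O) O]
    [Finite (IsLocalRing.ResidueField O)]
    (hval : (nhds (0 : O)).HasBasis (fun _ : ℕ => True)
      (fun n => ((IsLocalRing.maximalIdeal O ^ n : Ideal O) : Set O))) :
    CompactSpace O := by
  rw [← isCompact_univ_iff]
  rw [isCompact_iff_ultrafilter_le_nhds]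
  intro F _
  haveI : ∀ n : ℕ, Finite (O ⧸ (IsLocalRing.maximalIdeal O ^ n : Ideal O)) :=
    fun n => finite_quot_pow n
  -- for each n pick the class supported by F
  have hc : ∀ n : ℕ, ∃ c : O ⧸ (IsLocalRing.maximalIdeal O ^ n : Ideal O),
      (Ideal.Quotient.mk _) ⁻¹' {c} ∈ F := by
    intro n
    obtain ⟨c, hc⟩ := (F.map (Ideal.Quotient.mk (IsLocalRing.maximalIdeal O ^ n))).eq_pure_of_finite
    refine ⟨c, ?_⟩
    have : {c} ∈ (F.map (Ideal.Quotient.mk (IsLocalRing.maximalIdeal O ^ n))) := by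
      rw [hc]; exact rfl
    exact this
  choose c hcF using hc
  have ha : ∀ n, ∃ a : O, Ideal.Quotient.mk (IsLocalRing.maximalIdeal O ^ n) a = c n :=
    fun n => Ideal.Quotient.mk_surjective _
  choose a hac using ha
  -- Cauchy
  have hsmul : ∀ n : ℕ, ((IsLocalRing.maximalIdeal O ^ n) • ⊤ : Submodule O O)
      = (IsLocalRing.maximalIdeal O ^ n) := by
    intro n; rw [smul_eq_mul, Ideal.mul_top]
  have hcauchy : ∀ {m n : ℕ}, m ≤ n →
      a m ≡ a n [SMOD ((IsLocalRing.maximalIdeal O ^ m) • ⊤ : Submodule O O)] := by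
    intro m n hmn
    obtain ⟨z, hz1, hz2⟩ := Filter.nonempty_of_mem (Filter.inter_mem (hcF m) (hcF n))
    rw [Set.mem_preimage, Set.mem_singleton_iff, ← hac m] at hz1
    rw [Set.mem_preimage, Set.mem_singleton_iff, ← hac n] at hz2
    rw [SModEq.def]
    rw [Submodule.Quotient.eq, hsmul m]
    have h1 : z - a m ∈ (IsLocalRing.maximalIdeal O ^ m : Ideal O) :=
      (Ideal.Quotient.eq).mp hz1
    have h2 : z - a n ∈ (IsLocalRing.maximalIdeal O ^ m : Ideal O) :=
      Ideal.pow_le_pow_right hmn ((Ideal.Quotient.eq).mp hz2)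
    have : a m - a n = (z - a n) - (z - a m) := by ring
    rw [this]
    exact sub_mem h2 h1
  obtain ⟨L, hL⟩ := IsPrecomplete.prec (IsAdicComplete.toIsPrecomplete) @hcauchy
  refine ⟨L, trivial, ?_⟩
  intro U hU
  rw [← map_add_left_nhds_zero L, Filter.mem_map] at hU
  rw [hval.mem_iff] at hU
  obtain ⟨n, -, hsub⟩ := hU
  refine Filter.mem_of_superset (hcF n) ?_
  intro z hz
  rw [Set.mem_preimage, Set.mem_singleton_iff, ← hac n] at hz
  have h1 : z - a n ∈ (IsLocalRing.maximalIdeal O ^ n : Ideal O) := (Ideal.Quotient.eq).mp hz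
  have h2 : a n - L ∈ (IsLocalRing.maximalIdeal O ^ n : Ideal O) := by
    have := hL n
    rw [SModEq.def, Submodule.Quotient.eq, hsmul n] at this
    exact this
  have h3 : z - L ∈ (IsLocalRing.maximalIdeal O ^ n : Ideal O) := by
    have : z - L = (z - a n) + (a n - L) := by ring
    rw [this]; exact add_mem h1 h2
  have := hsub h3
  rw [Set.mem_preimage] at this
  simpa using this

end Statement6Aux
end Chunk2
section Chunk3
namespace Statement6Aux
open AlgebraicGeometry CategoryTheory CategoryTheory.Limits Topology

variable {O : Type} [CommRing O]

lemma continuous_mvpoly_eval [TopologicalSpace O] [IsTopologicalRing O] {N : ℕ}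
    (p : MvPolynomial (Fin N) O) :
    Continuous (fun a : Fin N → O => MvPolynomial.eval a p) := by
  induction p using MvPolynomial.induction_on with
  | C c => simpa using continuous_const
  | add p q hp hq => simp only [map_add]; exact hp.add hq
  | mul_X p i hp =>
      simp only [map_mul, MvPolynomial.eval_X]
      exact hp.mul (continuous_apply i)

lemma aeval_eq_eval {N : ℕ} (a : Fin N → O) (p : MvPolynomial (Fin N) O) :
    MvPolynomial.aeval a p = MvPolynomial.eval a p := rfl

/-- functoriality of Pts.map -/
lemma Pts_map_comp {X X' X'' : Scheme} {f : X ⟶ SpecR O} {f' : X' ⟶ SpecR O}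
    {f'' : X'' ⟶ SpecR O} (g : X ⟶ X') (w : g ≫ f' = f) (g' : X' ⟶ X'') (w' : g' ≫ f'' = f')
    (s : Pts f) :
    Pts.map g' w' (Pts.map g w s) = Pts.map (g ≫ g') (by rw [Category.assoc, w', w]) s := by
  apply Subtype.ext
  simp [Pts.map, Category.assoc]

/-- sections through the closed point of an open factor through it -/
lemma pts_factor [IsLocalRing O] {U Z : Scheme} (u : U ⟶ Z) [IsOpenImmersion u]
    {fZ : Z ⟶ SpecR O} (s : Pts fZ)
    (hcl : s.1.base (show PrimeSpectrum O from IsLocalRing.closedPoint O) ∈ Set.range u.base) :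
    ∃ t : Pts (u ≫ fZ), Pts.map u rfl t = s := by
  haveI : IsLocalRing ↑(CommRingCat.of O) := ‹IsLocalRing O›
  have hrange : Set.range s.1.base ⊆ Set.range u.base := by
    rintro _ ⟨z, rfl⟩
    have hspec : z ⤳ (show PrimeSpectrum O from IsLocalRing.closedPoint O) := IsLocalRing.specializes_closedPoint z
    have : s.1.base z ⤳ s.1.base (show PrimeSpectrum O from IsLocalRing.closedPoint O) := hspec.map s.1.base.hom.2
    exact (IsOpenImmersion.isOpen_range u).stableUnderGeneralization this hcl
  refine ⟨⟨IsOpenImmersion.lift u s.1 hrange, ?_⟩, ?_⟩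
  · rw [← Category.assoc, IsOpenImmersion.lift_fac, s.2]
  · exact Subtype.ext (IsOpenImmersion.lift_fac u s.1 hrange)

end Statement6Aux
end Chunk3
section Chunk4
namespace Statement6Aux
open AlgebraicGeometry CategoryTheory CategoryTheory.Limits Topology

variable {O : Type} [CommRing O] [TopologicalSpace O] [IsTopologicalRing O]

lemma lft_affineNStr (N : ℕ) : LocallyOfFiniteType (AffineNStr O N) := by
  apply HasRingHomProperty.Spec_iff
    (P := @LocallyOfFiniteType) (Q := fun {R S} [CommRing R] [CommRing S] f => RingHom.FiniteType f)
    |>.mpr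
  show RingHom.FiniteType (algebraMap O (MvPolynomial (Fin N) O))
  have h : (algebraMap O (MvPolynomial (Fin N) O)).toAlgebra =
      (inferInstance : Algebra O (MvPolynomial (Fin N) O)) :=
    Algebra.algebra_ext _ _ (fun r => by rw [RingHom.algebraMap_toAlgebra])
  unfold RingHom.FiniteType
  rw [h]
  exact (inferInstance : Algebra.FiniteType O (MvPolynomial (Fin N) O))

/-- the ring hom associated to a section of affine `N`-space agrees with evaluation at its
coordinates -/
lemma preimage_eq_aeval {N : ℕ} (s' : Pts (AffineNStr O N)) (p : MvPolynomial (Fin N) O) :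
    (Spec.preimage s'.1) p = MvPolynomial.aeval (affineCoords O N s') p := by
  set χcat := Spec.preimage s'.1
  have hcomp : CommRingCat.ofHom (algebraMap O (MvPolynomial (Fin N) O)) ≫ χcat
      = 𝟙 (CommRingCat.of O) := by
    apply Spec.map_injective
    rw [Spec.map_comp, Spec.map_preimage, Spec.map_id]
    exact s'.2
  have hcommutes : ∀ r : O, χcat (algebraMap O (MvPolynomial (Fin N) O) r) = r :=
    fun r => ConcreteCategory.congr_hom hcomp r
  let χA : MvPolynomial (Fin N) O →ₐ[O] O :=
    { toRingHom := χcat.hom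
      commutes' := fun r => by
        rw [show algebraMap O O r = r from by rw [Algebra.algebraMap_self]; rfl]
        exact hcommutes r }
  have hext : χA = MvPolynomial.aeval (affineCoords O N s') := by
    apply MvPolynomial.algHom_ext
    intro i
    rw [MvPolynomial.aeval_X]
    rfl
  exact AlgHom.congr_fun hext p

end Statement6Aux
end Chunk4
section Chunk5
namespace Statement6Aux
open AlgebraicGeometry CategoryTheory CategoryTheory.Limits Topology

set_option linter.unusedSectionVars false

variable {O : Type} [CommRing O] [TopologicalSpace O] [IsTopologicalRing O]

lemma affine_pts [T2Space O] [CompactSpace O]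
    (T : PointsTopology O) {U : Scheme} [IsAffine U] (fU : U ⟶ SpecR O)
    (hU : LocallyOfFiniteType fU) :
    letI := T.top fU hU
    CompactSpace (Pts fU) ∧ T2Space (Pts fU) := by
  letI := T.top fU hU
  -- identify U with Spec of its global sections
  set e₀ := U.isoSpec with he₀
  set fU' := e₀.inv ≫ fU with hfU'def
  have hfU' : LocallyOfFiniteType fU' :=
    by haveI := hU; infer_instance
  set ρcat := Spec.preimage fU' with hρ
  have hfU'eq : Spec.map ρcat = fU' := Spec.map_preimage fU'
  have hft : RingHom.FiniteType ρcat.hom := by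
    rw [← hfU'eq] at hfU'
    exact (HasRingHomProperty.Spec_iff
      (P := @LocallyOfFiniteType) (Q := fun {R S} [CommRing R] [CommRing S] f => RingHom.FiniteType f)).mp hfU'
  letI algInst : Algebra O ↑(Γ(U, ⊤)) := ρcat.hom.toAlgebra
  have hft' : Algebra.FiniteType O ↑(Γ(U, ⊤)) := hft
  obtain ⟨N, ψ, hψ⟩ := Algebra.FiniteType.iff_quotient_mvPolynomial''.mp hft'
  set κcat : CommRingCat.of (MvPolynomial (Fin N) O) ⟶ Γ(U, ⊤) :=
    CommRingCat.ofHom ψ.toRingHom with hκcat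
  set κ := Spec.map κcat with hκ
  haveI : IsClosedImmersion κ := IsClosedImmersion.spec_of_surjective κcat hψ
  set g : U ⟶ AffineN O N := e₀.hom ≫ κ with hg
  haveI : IsClosedImmersion g := inferInstance
  have hαψ : CommRingCat.ofHom (algebraMap O (MvPolynomial (Fin N) O)) ≫ κcat = ρcat := by
    ext r
    exact ψ.commutes r
  have h1 : κ ≫ AffineNStr O N = fU' := by
    rw [hκ, AffineNStr, ← Spec.map_comp, hαψ, hfU'eq]
  have w : g ≫ AffineNStr O N = fU := by
    rw [hg, Category.assoc, h1, hfU'def, Iso.hom_inv_id_assoc]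
  have hA := lft_affineNStr (O := O) N
  letI := T.top (AffineNStr O N) hA
  have hembg : IsEmbedding (Pts.map g w) := T.closedImmersion_isEmbedding hU hA g w ‹_›
  have hhomeo : IsHomeomorph (affineCoords O N) := T.affine_homeo N hA
  set e : Pts fU → (Fin N → O) := (affineCoords O N) ∘ (Pts.map g w) with he
  have hembe : IsEmbedding e := hhomeo.isEmbedding.comp hembg
  -- range characterization
  have hpre : ∀ t' : SpecR O ⟶ Spec Γ(U, ⊤),
      Spec.preimage (t' ≫ κ) = κcat ≫ Spec.preimage t' := by
    intro t'
    apply Spec.map_injective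
    rw [Spec.map_preimage, Spec.map_comp, Spec.map_preimage, hκ]
  have hrange : Set.range e =
      {a : Fin N → O | ∀ p ∈ RingHom.ker ψ.toRingHom, MvPolynomial.aeval a p = 0} := by
    ext a
    constructor
    · rintro ⟨t, rfl⟩
      intro p hp
      set s' := Pts.map g w t with hs'
      have hs'1 : s'.1 = (t.1 ≫ e₀.hom) ≫ κ := by
        show t.1 ≫ g = _
        rw [hg, Category.assoc]
      have hχ : Spec.preimage s'.1 = κcat ≫ Spec.preimage (t.1 ≫ e₀.hom) := by
        rw [hs'1]
        exact hpre _
      have : MvPolynomial.aeval (e t) p = (Spec.preimage s'.1) p :=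
        (preimage_eq_aeval s' p).symm
      rw [this, hχ]
      show (Spec.preimage (t.1 ≫ e₀.hom)) (ψ.toRingHom p) = 0
      rw [RingHom.mem_ker.mp hp, map_zero]
    · intro ha
      set χrh := (MvPolynomial.aeval (R := O) a).toRingHom with hχrh
      have hkerle : RingHom.ker ψ.toRingHom ≤ RingHom.ker χrh := by
        intro p hp
        rw [RingHom.mem_ker]
        exact ha p hp
      set τ : ↑(Γ(U, ⊤)) →+* O :=
        ψ.toRingHom.liftOfRightInverse (Function.surjInv hψ) (Function.rightInverse_surjInv hψ)
          ⟨χrh, hkerle⟩ with hτdef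
      have hτ : τ.comp ψ.toRingHom = χrh :=
        RingHom.liftOfRightInverse_comp ψ.toRingHom (Function.surjInv hψ)
          (Function.rightInverse_surjInv hψ) ⟨χrh, hkerle⟩
      set τcat : Γ(U, ⊤) ⟶ CommRingCat.of O := CommRingCat.ofHom τ with hτcat
      have hτρ : ρcat ≫ τcat = 𝟙 (CommRingCat.of O) := by
        apply CommRingCat.hom_ext
        show τ.comp ρcat.hom = RingHom.id O
        have hρψ : ρcat.hom = ψ.toRingHom.comp (algebraMap O (MvPolynomial (Fin N) O)) :=
          (RingHom.ext fun r => ψ.commutes r).symm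
        rw [hρψ, ← RingHom.comp_assoc, hτ]
        refine RingHom.ext fun r => ?_
        show χrh (MvPolynomial.C r) = r
        rw [hχrh]
        simp
      set t1 : SpecR O ⟶ Spec Γ(U, ⊤) := Spec.map τcat with ht1
      have hsec : (t1 ≫ e₀.inv) ≫ fU = 𝟙 (SpecR O) := by
        rw [Category.assoc, ← hfU'def, ← hfU'eq, ht1, ← Spec.map_comp, hτρ, Spec.map_id]
      refine ⟨⟨t1 ≫ e₀.inv, hsec⟩, ?_⟩
      have hs'1 : (Pts.map g w ⟨t1 ≫ e₀.inv, hsec⟩).1 = t1 ≫ κ := by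
        show (t1 ≫ e₀.inv) ≫ g = t1 ≫ κ
        rw [hg, Category.assoc, Iso.inv_hom_id_assoc]
      funext i
      show (Spec.preimage (Pts.map g w ⟨t1 ≫ e₀.inv, hsec⟩).1) (MvPolynomial.X i) = a i
      rw [hs'1, hpre t1, ht1]
      show (Spec.preimage (Spec.map τcat)) (ψ.toRingHom (MvPolynomial.X i)) = a i
      rw [Spec.preimage_map]
      show (τ.comp ψ.toRingHom) (MvPolynomial.X i) = a i
      rw [hτ, hχrh]
      simp
  have hZclosed : IsClosed {a : Fin N → O | ∀ p ∈ RingHom.ker ψ.toRingHom, MvPolynomial.aeval a p = 0} := by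
    have : {a : Fin N → O | ∀ p ∈ RingHom.ker ψ.toRingHom, MvPolynomial.aeval a p = 0}
        = ⋂ p ∈ RingHom.ker ψ.toRingHom, {a : Fin N → O | MvPolynomial.eval a p = 0} := by
      ext a; simp [aeval_eq_eval]
    rw [this]
    refine isClosed_biInter (fun p _ => ?_)
    exact isClosed_eq (continuous_mvpoly_eval p) continuous_const
  have hcmp : IsCompact (Set.range e) := by
    rw [hrange]
    exact hZclosed.isCompact
  constructor
  · rw [← isCompact_univ_iff, hembe.isCompact_iff, Set.image_univ]
    exact hcmp
  · exact hembe.t2Space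

end Statement6Aux
end Chunk5
section Chunk6
namespace Statement6Aux
open AlgebraicGeometry CategoryTheory CategoryTheory.Limits Topology

set_option linter.unusedSectionVars false

variable {O : Type} [CommRing O] [TopologicalSpace O] [IsTopologicalRing O]

lemma compact_pts [T2Space O] [CompactSpace O] [IsLocalRing O]
    (T : PointsTopology O) {X : Scheme} [CompactSpace X] (f : X ⟶ SpecR O)
    (hf : LocallyOfFiniteType f) :
    letI := T.top f hf
    CompactSpace (Pts f) := by
  letI := T.top f hf
  haveI := hf
  haveI haff : ∀ j : (X.affineCover.finiteSubcover).I₀,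
      IsAffine ((X.affineCover.finiteSubcover).X j) := by
    intro j
    exact (inferInstance : IsAffine (X.affineCover.X _))
  have hlftUj : ∀ j : (X.affineCover.finiteSubcover).I₀, LocallyOfFiniteType ((X.affineCover.finiteSubcover).f j ≫ f) := fun j => inferInstance
  have hcover : (Set.univ : Set (Pts f)) ⊆
      ⋃ j : (X.affineCover.finiteSubcover).I₀, Set.range (Pts.map ((X.affineCover.finiteSubcover).f j) rfl : Pts ((X.affineCover.finiteSubcover).f j ≫ f) → Pts f) := by
    intro s _
    have hc := (X.affineCover.finiteSubcover).covers (s.1.base (show PrimeSpectrum O from IsLocalRing.closedPoint O))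
    obtain ⟨t, ht⟩ := pts_factor ((X.affineCover.finiteSubcover).f ((X.affineCover.finiteSubcover).idx _)) s hc
    exact Set.mem_iUnion.mpr ⟨(X.affineCover.finiteSubcover).idx _, ⟨t, ht⟩⟩
  have huniv : (Set.univ : Set (Pts f)) =
      ⋃ j : (X.affineCover.finiteSubcover).I₀, Set.range (Pts.map ((X.affineCover.finiteSubcover).f j) rfl : Pts ((X.affineCover.finiteSubcover).f j ≫ f) → Pts f) :=
    Set.eq_of_subset_of_subset hcover (Set.subset_univ _)
  rw [← isCompact_univ_iff, huniv]
  apply isCompact_iUnion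
  intro j
  haveI := (affine_pts T ((X.affineCover.finiteSubcover).f j ≫ f) (hlftUj j)).1
  letI := T.top ((X.affineCover.finiteSubcover).f j ≫ f) (hlftUj j)
  have hcont : Continuous (Pts.map ((X.affineCover.finiteSubcover).f j) rfl : Pts ((X.affineCover.finiteSubcover).f j ≫ f) → Pts f) :=
    T.continuous_map (hlftUj j) hf ((X.affineCover.finiteSubcover).f j) rfl
  rw [← Set.image_univ]
  exact isCompact_univ.image hcont

end Statement6Aux
end Chunk6

/-- the ring of integers `O` of a nonarchimedean local field (a complete
discrete valuation ring with finite residue field), with its valuation topology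
(characterized by: `O` is a topological ring whose neighborhoods of `0` have the powers of
the maximal ideal as a basis), is proper-closed. -/
theorem statement_6 (O : Type) [CommRing O] [IsDomain O] [IsDiscreteValuationRing O]
    [IsAdicComplete (IsLocalRing.maximalIdeal O) O]
    [Finite (IsLocalRing.ResidueField O)]
    [TopologicalSpace O] [IsTopologicalRing O]
    (hval : (nhds (0 : O)).HasBasis (fun _ : ℕ => True)
      (fun n => ((IsLocalRing.maximalIdeal O ^ n : Ideal O) : Set O)))
    (hunit : IsOpen {x : O | IsUnit x})
    (hinv : ContinuousOn (fun x : O => Ring.inverse x) {x : O | IsUnit x})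
    (T : PointsTopology O) :
    ProperClosed T := by
  haveI : T2Space O := Statement6Aux.t2space_of_val hval
  haveI : CompactSpace O := Statement6Aux.compactSpace_of_val hval
  intro X Y f g hf hg φ w hφ
  haveI := hf; haveI := hg; haveI := hφ
  letI := T.top f hf
  letI := T.top g hg
  intro C hC
  refine isClosed_of_closure_subset ?_
  intro y hy
  obtain ⟨F, hSF, hFy⟩ := mem_closure_iff_ultrafilter.mp hy
  -- affine chart around the image of the closed point under y
  set cp := y.1.base (show PrimeSpectrum O from IsLocalRing.closedPoint O) with hcp
  set ι := Y.affineCover.f (Y.affineCover.idx cp) with hι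
  haveI : IsOpenImmersion ι := Y.affineCover.map_prop (Y.affineCover.idx cp)
  have hfVlft : LocallyOfFiniteType (ι ≫ g) := inferInstance
  haveI : IsAffine (Y.affineCover.X (Y.affineCover.idx cp)) := inferInstance
  obtain ⟨yV, hyV⟩ := Statement6Aux.pts_factor ι y (Y.affineCover.covers cp)
  letI := T.top (ι ≫ g) hfVlft
  have hopenEmb : IsOpenEmbedding (Pts.map ι rfl : Pts (ι ≫ g) → Pts g) :=
    T.openImmersion_isOpenEmbedding hfVlft hg ι rfl ‹_›
  have hyR : y ∈ Set.range (Pts.map ι rfl : Pts (ι ≫ g) → Pts g) := ⟨yV, hyV⟩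
  have hRF : Set.range (Pts.map ι rfl : Pts (ι ≫ g) → Pts g) ∈ F :=
    hFy (hopenEmb.isOpen_range.mem_nhds hyR)
  -- the pullback of X over the chart
  haveI : IsOpenImmersion (pullback.fst φ ι) := inferInstance
  haveI : QuasiCompact (pullback.snd φ ι) := inferInstance
  haveI : CompactSpace ↑(pullback φ ι) := by
    rw [← isCompact_univ_iff]
    have h := QuasiCompact.isCompact_preimage (f := pullback.snd φ ι)
      Set.univ isOpen_univ isCompact_univ
    simpa using h
  have hfPl : LocallyOfFiniteType (pullback.fst φ ι ≫ f) := inferInstance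
  haveI := Statement6Aux.compact_pts T (pullback.fst φ ι ≫ f) hfPl
  letI := T.top (pullback.fst φ ι ≫ f) hfPl
  have hcont1 : Continuous (Pts.map (pullback.fst φ ι) rfl :
      Pts (pullback.fst φ ι ≫ f) → Pts f) :=
    T.continuous_map hfPl hf (pullback.fst φ ι) rfl
  have hK : IsCompact (Set.range (Pts.map (pullback.fst φ ι) rfl :
      Pts (pullback.fst φ ι ≫ f) → Pts f)) := by
    rw [← Set.image_univ]; exact isCompact_univ.image hcont1
  set m := (Pts.map φ w : Pts f → Pts g) with hm_def
  have hm : Continuous m := T.continuous_map hf hg φ w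
  -- an ultrafilter on Pts f refining F and concentrated on C
  have hne : (Filter.comap m ↑F ⊓ Filter.principal C).NeBot := by
    rw [Filter.inf_principal_neBot_iff]
    intro Uu hUu
    obtain ⟨A, hA, hAsub⟩ := hUu
    have hAS : (A ∩ (m '' C)).Nonempty := F.nonempty_of_mem (Filter.inter_mem hA hSF)
    obtain ⟨y', hy'A, x, hxC, rfl⟩ := hAS
    exact ⟨x, hAsub (by simpa using hy'A), hxC⟩
  set G := Ultrafilter.of (Filter.comap m ↑F ⊓ Filter.principal C) with hGdef
  have hGle : ↑G ≤ Filter.comap m ↑F ⊓ Filter.principal C :=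
    Ultrafilter.of_le _
  have hGC : C ∈ G := Filter.le_principal_iff.mp (hGle.trans inf_le_right)
  have hGcomap : ↑G ≤ Filter.comap m ↑F := hGle.trans inf_le_left
  -- preimages of chart points come from the pullback
  have hpre_sub : m ⁻¹' (Set.range (Pts.map ι rfl : Pts (ι ≫ g) → Pts g)) ⊆
      Set.range (Pts.map (pullback.fst φ ι) rfl : Pts (pullback.fst φ ι ≫ f) → Pts f) := by
    rintro x ⟨yv, hyv⟩
    have hcomm : x.1 ≫ φ = yv.1 ≫ ι := by
      have h1 := congrArg Subtype.val hyv
      exact h1.symm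
    have hsec : pullback.lift x.1 yv.1 hcomm ≫ (pullback.fst φ ι ≫ f) = 𝟙 (SpecR O) := by
      rw [← Category.assoc, pullback.lift_fst, x.2]
    refine ⟨⟨pullback.lift x.1 yv.1 hcomm, hsec⟩, Subtype.ext ?_⟩
    show pullback.lift x.1 yv.1 hcomm ≫ pullback.fst φ ι = x.1
    exact pullback.lift_fst _ _ _
  have hKG : Set.range (Pts.map (pullback.fst φ ι) rfl :
      Pts (pullback.fst φ ι ≫ f) → Pts f) ∈ G :=
    Filter.mem_of_superset (hGcomap (Filter.preimage_mem_comap hRF)) hpre_sub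
  obtain ⟨x, hxK, hGx⟩ := hK.ultrafilter_le_nhds G (Filter.le_principal_iff.mpr hKG)
  have hxC : x ∈ C := by
    have : x ∈ closure C := mem_closure_iff_ultrafilter.mpr ⟨G, hGC, hGx⟩
    rwa [hC.closure_eq] at this
  -- the image point lies in the chart
  have wp2 : pullback.snd φ ι ≫ (ι ≫ g) = pullback.fst φ ι ≫ f := by
    rw [← Category.assoc, ← pullback.condition, Category.assoc, w]
  have hmx_mem : m x ∈ Set.range (Pts.map ι rfl : Pts (ι ≫ g) → Pts g) := by
    obtain ⟨xt, rfl⟩ := hxK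
    refine ⟨Pts.map (pullback.snd φ ι) wp2 xt, ?_⟩
    apply Subtype.ext
    show (xt.1 ≫ pullback.snd φ ι) ≫ ι = (xt.1 ≫ pullback.fst φ ι) ≫ φ
    rw [Category.assoc, Category.assoc, pullback.condition]
  -- limits agree by Hausdorffness of the chart
  have hmxy : m x = y := by
    by_contra hne'
    haveI hT2V : T2Space (Pts (ι ≫ g)) := (Statement6Aux.affine_pts T (ι ≫ g) hfVlft).2
    haveI : T2Space ↥(Set.range (Pts.map ι rfl : Pts (ι ≫ g) → Pts g)) :=
      hopenEmb.isEmbedding.toHomeomorph.symm.isEmbedding.t2Space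
    have hneq : (⟨m x, hmx_mem⟩ : ↥(Set.range (Pts.map ι rfl : Pts (ι ≫ g) → Pts g)))
        ≠ ⟨y, hyR⟩ := fun hcontr => hne' (congrArg Subtype.val hcontr)
    obtain ⟨A', B', hA'o, hB'o, hmA, hyB, hdisj⟩ := t2_separation hneq
    have hvalemb := hopenEmb.isOpen_range.isOpenEmbedding_subtypeVal
    have hAopen : IsOpen (Subtype.val '' A') := hvalemb.isOpenMap _ hA'o
    have hBopen : IsOpen (Subtype.val '' B') := hvalemb.isOpenMap _ hB'o
    have hHle1 : Filter.map m ↑G ≤ ↑F := (Filter.map_mono hGcomap).trans Filter.map_comap_le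
    have hHle2 : Filter.map m ↑G ≤ nhds (m x) := (Filter.map_mono hGx).trans (hm.tendsto x)
    have hAH : Subtype.val '' A' ∈ Filter.map m ↑G :=
      hHle2 (hAopen.mem_nhds ⟨⟨m x, hmx_mem⟩, hmA, rfl⟩)
    have hBH : Subtype.val '' B' ∈ Filter.map m ↑G :=
      hHle1 (hFy (hBopen.mem_nhds ⟨⟨y, hyR⟩, hyB, rfl⟩))
    have hnonempty : ((Subtype.val '' A') ∩ (Subtype.val '' B')).Nonempty :=
      Filter.nonempty_of_mem (Filter.inter_mem hAH hBH)
    have hdisj2 : Disjoint (Subtype.val '' A') (Subtype.val '' B') :=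
      Set.disjoint_image_of_injective Subtype.val_injective hdisj
    rw [Set.disjoint_iff_inter_eq_empty] at hdisj2
    rw [hdisj2] at hnonempty
    exact absurd hnonempty (by simp)
  exact ⟨x, hxC, hmxy⟩

end
end

section
/- Let R be a local topological ring that is Hausdorff, in which R^× is open in R, is a topological group in its subspace topology, and is closed in R (e.g., R could be a valuation ring with its valuation topology), and fix a topologization of rational points over R. Then for every quasi-compact immersion f : X → Y of locally of finite type R-schemes, the induced map f(R) : X(R) → Y(R) is a closed topological embedding. -/
open AlgebraicGeometry CategoryTheory CategoryTheory.Limits Topology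

noncomputable section

section Statement9Aux

open TopologicalSpace

variable {R : Type} [CommRing R]

lemma pts_map_map {X Y Z : Scheme} {f : X ⟶ SpecR R} {g : Y ⟶ SpecR R} {h : Z ⟶ SpecR R}
    {a : X ⟶ Y} {b : Y ⟶ Z} {c : X ⟶ Z} (hc : a ≫ b = c) (wa : a ≫ g = f) (wb : b ≫ h = g)
    (wc : c ≫ h = f) (s : Pts f) :
    Pts.map b wb (Pts.map a wa s) = Pts.map c wc s := by
  apply Subtype.ext
  show (s.1 ≫ a) ≫ b = s.1 ≫ c
  rw [Category.assoc, hc]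

lemma spec_preimage_comp {A B : CommRingCat} (u : SpecR R ⟶ Spec A) (σ : B ⟶ A) :
    Spec.preimage (u ≫ Spec.map σ) = σ ≫ Spec.preimage u := by
  have h : u ≫ Spec.map σ = Spec.map (σ ≫ Spec.preimage u) := by
    rw [Spec.map_comp, Spec.map_preimage]
  rw [h, Spec.preimage_map]

lemma lft_affineNStr (n : ℕ) : LocallyOfFiniteType (AffineNStr R n) := by
  unfold AffineNStr
  rw [HasRingHomProperty.Spec_iff (P := @LocallyOfFiniteType)]
  show RingHom.FiniteType (algebraMap R (MvPolynomial (Fin n) R))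
  have h : (algebraMap R (MvPolynomial (Fin n) R)).toAlgebra
      = (inferInstance : Algebra R (MvPolynomial (Fin n) R)) :=
    Algebra.algebra_ext _ _ fun r => rfl
  unfold RingHom.FiniteType
  rw [h]
  exact (inferInstance : Algebra.FiniteType R (MvPolynomial (Fin n) R))

/-- Evaluation of a global function on an `R`-point of an affine scheme. -/
def ptsEval {A : CommRingCat} {sA : Spec A ⟶ SpecR R} (y : Pts sA) (a : A) : R :=
  Spec.preimage y.1 a

lemma continuous_ptsEval [TopologicalSpace R] (T : PointsTopology R) {A : CommRingCat}
    {sA : Spec A ⟶ SpecR R} (hsA : LocallyOfFiniteType sA) (a : A) :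
    letI := T.top sA hsA
    Continuous (fun y : Pts sA => ptsEval y a) := by
  letI := T.top sA hsA
  letI : Algebra R ↑A := RingHom.toAlgebra (Spec.preimage sA).hom
  set μ : CommRingCat.of (MvPolynomial (Fin 1) R) ⟶ A :=
    CommRingCat.ofHom (MvPolynomial.aeval (fun _ : Fin 1 => a)).toRingHom with hμdef
  have hcomp : CommRingCat.ofHom (algebraMap R (MvPolynomial (Fin 1) R)) ≫ μ
      = Spec.preimage sA := by
    apply CommRingCat.hom_ext
    rw [CommRingCat.hom_comp, hμdef]
    show (MvPolynomial.aeval (fun _ : Fin 1 => a)).toRingHom.comp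
        (algebraMap R (MvPolynomial (Fin 1) R)) = _
    rw [AlgHom.toRingHom_eq_coe, AlgHom.comp_algebraMap, RingHom.algebraMap_toAlgebra]
  have wcond : Spec.map μ ≫ AffineNStr R 1 = sA := by
    show Spec.map μ ≫ Spec.map (CommRingCat.ofHom (algebraMap R (MvPolynomial (Fin 1) R))) = sA
    rw [← Spec.map_comp, hcomp, Spec.map_preimage]
  have key : (fun y : Pts sA => ptsEval y a)
      = (fun v : Fin 1 → R => v 0) ∘ (affineCoords R 1) ∘ (Pts.map (Spec.map μ) wcond) := by
    funext y
    show Spec.preimage y.1 a = Spec.preimage (y.1 ≫ Spec.map μ) (MvPolynomial.X 0)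
    rw [spec_preimage_comp y.1 μ]
    show Spec.preimage y.1 a
        = Spec.preimage y.1 ((MvPolynomial.aeval (fun _ : Fin 1 => a)) (MvPolynomial.X 0))
    rw [MvPolynomial.aeval_X]
  rw [key]
  letI := T.top (AffineNStr R 1) (lft_affineNStr 1)
  have hc1 := T.continuous_map hsA (lft_affineNStr 1) (Spec.map μ) wcond
  have hc2 := (T.affine_homeo 1 (lft_affineNStr 1)).continuous
  exact (continuous_apply (0 : Fin 1)).comp (hc2.comp hc1)

/-- A morphism from `Spec R` to an affine scheme factors through a closed immersion as soon as
its pullback on global sections kills the kernel of the closed immersion. -/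
lemma exists_factor_closedImmersion {T' Tsch : Scheme} [IsAffine Tsch] (κ : T' ⟶ Tsch)
    [IsClosedImmersion κ] (u : SpecR R ⟶ Tsch)
    (H : ∀ s : Γ(Tsch, ⊤), κ.appTop s = 0 →
      (Scheme.ΓSpecIso (CommRingCat.of R)).hom (u.appTop s) = 0) :
    ∃ v : SpecR R ⟶ T', v ≫ κ = u := by
  obtain ⟨hT', hsurj⟩ := IsClosedImmersion.isAffine_surjective_of_isAffine κ
  haveI := hT'
  let τ : Γ(Tsch, ⊤) ⟶ CommRingCat.of R :=
    u.appTop ≫ (Scheme.ΓSpecIso (CommRingCat.of R)).hom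
  have hker : ∀ s, κ.appTop s = 0 → τ s = 0 := H
  let ℓ : ↑Γ(T', ⊤) →+* ↑(CommRingCat.of R) :=
    RingHom.liftOfRightInverse κ.appTop.hom (Function.surjInv hsurj)
      (Function.rightInverse_surjInv hsurj)
      ⟨τ.hom, by intro s hs; exact hker s (RingHom.mem_ker.mp hs)⟩
  have hℓ : ∀ s, ℓ (κ.appTop s) = τ s := fun s =>
    RingHom.liftOfRightInverse_comp_apply κ.appTop.hom _ _ _ s
  refine ⟨Spec.map (CommRingCat.ofHom ℓ) ≫ T'.isoSpec.inv, ?_⟩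
  have h1 : T'.isoSpec.inv ≫ κ = Spec.map (κ.appTop) ≫ Tsch.isoSpec.inv :=
    (Scheme.isoSpec_inv_naturality κ).symm
  rw [Category.assoc, h1, ← Category.assoc, ← Spec.map_comp]
  have h2 : κ.appTop ≫ CommRingCat.ofHom ℓ = τ := by
    apply CommRingCat.hom_ext
    rw [CommRingCat.hom_comp]
    exact RingHom.ext hℓ
  rw [h2]
  have h3 : u ≫ Tsch.isoSpec.hom = Spec.map τ := by
    show u ≫ Tsch.toSpecΓ = _
    rw [Scheme.toSpecΓ_naturality u]
    show (Spec (CommRingCat.of R)).toSpecΓ ≫ Spec.map u.appTop = _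
    rw [← SpecMap_ΓSpecIso_hom, ← Spec.map_comp]
  rw [← h3, Category.assoc, Iso.hom_inv_id, Category.comp_id]

lemma closed_range_spec [TopologicalSpace R] [IsLocalRing R] [T2Space R]
    (hclosed : IsClosed {x : R | IsUnit x})
    (T : PointsTopology R)
    {W : Scheme} {A : CommRingCat} (ψ : W ⟶ Spec A) [IsImmersion ψ] [QuasiCompact ψ]
    {sW : W ⟶ SpecR R} {sA : Spec A ⟶ SpecR R}
    (hsW : LocallyOfFiniteType sW) (hsA : LocallyOfFiniteType sA)
    (wψ : ψ ≫ sA = sW) :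
    letI := T.top sW hsW
    letI := T.top sA hsA
    IsClosed (Set.range (Pts.map ψ wψ)) := by
  letI := T.top sW hsW
  letI := T.top sA hsA
  haveI : IsLocalRing ↥(CommRingCat.of R) := inferInstanceAs (IsLocalRing R)
  haveI : CompactSpace W := QuasiCompact.compactSpace_of_compactSpace ψ
  haveI : QuasiSeparatedSpace W := quasiSeparatedSpace_of_quasiSeparated ψ
  set ρ : A ⟶ Γ(W, ⊤) := (Scheme.ΓSpecIso A).inv ≫ ψ.appTop with hρ
  have hψfac : ψ = W.toSpecΓ ≫ Spec.map ρ := by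
    rw [hρ, Spec.map_comp, ← Category.assoc, ← Scheme.toSpecΓ_naturality, Category.assoc,
      ← SpecMap_ΓSpecIso_hom, ← Spec.map_comp, Iso.inv_hom_id, Spec.map_id, Category.comp_id]
  set I : Ideal ↑A := RingHom.ker ρ.hom with hI
  -- description of the closure of the image
  have hK1 : closure (Set.range ψ.base : Set (PrimeSpectrum ↑A)) = PrimeSpectrum.zeroLocus (I : Set ↑A) := by
    rw [← PrimeSpectrum.zeroLocus_vanishingIdeal_eq_closure]
    apply subset_antisymm
    · apply PrimeSpectrum.zeroLocus_anti_mono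
      intro a ha
      rw [SetLike.mem_coe, PrimeSpectrum.mem_vanishingIdeal]
      rintro x ⟨wpt, rfl⟩
      have hb : ψ.base wpt = PrimeSpectrum.comap ρ.hom (W.toSpecΓ.base wpt) := by
        rw [hψfac]; rfl
      have ha' : ρ.hom a = 0 := RingHom.mem_ker.mp ha
      rw [hb]; refine Ideal.mem_comap.mpr ?_; rw [ha']
      exact Ideal.zero_mem _
    · rw [PrimeSpectrum.zeroLocus_subset_zeroLocus_iff]
      intro a ha
      rw [PrimeSpectrum.mem_vanishingIdeal] at ha
      rw [Ideal.mem_radical_iff]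
      have hbo : W.basicOpen (ρ a) = ⊥ := by
        have h1 : W.basicOpen (ρ a)
            = ψ ⁻¹ᵁ ((Spec A).basicOpen ((Scheme.ΓSpecIso A).inv a)) := by
          rw [Scheme.preimage_basicOpen]; rfl
        rw [h1, basicOpen_eq_of_affine, eq_bot_iff]
        intro wpt hw
        exact absurd (ha _ ⟨wpt, rfl⟩) ((PrimeSpectrum.mem_basicOpen _ _).mp hw)
      obtain ⟨n, hn⟩ := (Scheme.isNilpotent_iff_basicOpen_eq_bot (ρ a)).mpr hbo
      exact ⟨n, RingHom.mem_ker.mpr (by rw [map_pow, hn])⟩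
  set U₀ : Set (PrimeSpectrum ↑A) := coborder (Set.range ψ.base) with hU₀def
  have hU₀open : IsOpen U₀ := ψ.isLocallyClosed_range.isOpen_coborder
  have hdecomp : Set.range ψ.base = U₀ ∩ closure (Set.range ψ.base) := coborder_inter_closure.symm
  have hcpt : IsCompact (Set.range ψ.base : Set (PrimeSpectrum ↑A)) :=
    isCompact_range ψ.continuous
  have hcover : ∀ x ∈ Set.range ψ.base, ∃ r : ↑A,
      x ∈ PrimeSpectrum.basicOpen r ∧ ↑(PrimeSpectrum.basicOpen r) ⊆ U₀ := by
    intro x hx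
    have hxU : x ∈ U₀ := subset_coborder hx
    obtain ⟨s, ⟨r, rfl⟩, hxs, hsub⟩ :=
      PrimeSpectrum.isTopologicalBasis_basic_opens.exists_subset_of_mem_open hxU hU₀open
    exact ⟨r, hxs, hsub⟩
  choose rfun hr1 hr2 using hcover
  obtain ⟨t, ht⟩ := hcpt.elim_finite_subcover
    (fun x : {x // x ∈ Set.range ψ.base} =>
      (PrimeSpectrum.basicOpen (rfun x.1 x.2) : Set (PrimeSpectrum ↑A)))
    (fun x => (PrimeSpectrum.basicOpen _).2)
    (fun x hx => Set.mem_iUnion.mpr ⟨⟨x, hx⟩, hr1 x hx⟩)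
  haveI : DecidableEq ↑A := Classical.decEq _
  set G : Finset ↑A := t.image (fun x => rfun x.1 x.2) with hG
  have hGsub : ∀ r ∈ G, ↑(PrimeSpectrum.basicOpen r) ⊆ U₀ := by
    intro r hr
    obtain ⟨x, -, rfl⟩ := Finset.mem_image.mp hr
    exact hr2 x.1 x.2
  have hGcover : ∀ x ∈ Set.range ψ.base, ∃ r ∈ G, x ∈ PrimeSpectrum.basicOpen r := by
    intro x hx
    obtain ⟨i, hi⟩ := Set.mem_iUnion.mp (ht hx)
    obtain ⟨hit, hxi⟩ := Set.mem_iUnion.mp hi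
    exact ⟨rfun i.1 i.2, Finset.mem_image.mpr ⟨i, hit, rfl⟩, hxi⟩
  -- the candidate closed set
  set S : Set (Pts sA) :=
    {y | ∀ a ∈ I, ptsEval y a = 0} ∩ {y | ∃ r ∈ G, IsUnit (ptsEval y r)} with hSdef
  have hSclosed : IsClosed S := by
    apply IsClosed.inter
    · have he : {y : Pts sA | ∀ a ∈ I, ptsEval y a = 0}
          = ⋂ a ∈ (I : Set ↑A), (fun y => ptsEval y a) ⁻¹' {0} := by
        ext y; simp
      rw [he]
      exact isClosed_biInter fun a _ => isClosed_singleton.preimage (continuous_ptsEval T hsA a)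
    · have he : {y : Pts sA | ∃ r ∈ G, IsUnit (ptsEval y r)}
          = ⋃ r ∈ G, (fun y => ptsEval y r) ⁻¹' {x : R | IsUnit x} := by
        ext y; simp
      rw [he]
      exact Set.Finite.isClosed_biUnion G.finite_toSet
        fun r _ => hclosed.preimage (continuous_ptsEval T hsA r)
  have hmain : Set.range (Pts.map ψ wψ) = S := by
    apply subset_antisymm
    · rintro _ ⟨x, rfl⟩
      constructor
      · intro a ha
        show Spec.preimage (x.1 ≫ ψ) a = 0
        have hfac : x.1 ≫ ψ = (x.1 ≫ W.toSpecΓ) ≫ Spec.map ρ := by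
          rw [hψfac, Category.assoc]
        rw [hfac, spec_preimage_comp]
        show Spec.preimage (x.1 ≫ W.toSpecΓ) (ρ a) = 0
        rw [show ρ a = 0 from RingHom.mem_ker.mp ha, map_zero]
      · have hmem : (x.1 ≫ ψ).base (IsLocalRing.closedPoint ↥(CommRingCat.of R))
            ∈ Set.range ψ.base := ⟨x.1.base _, (Scheme.Hom.comp_apply _ _ _).symm⟩
        obtain ⟨r, hrG, hxr⟩ := hGcover _ hmem
        refine ⟨r, hrG, ?_⟩
        have hy : x.1 ≫ ψ = Spec.map (Spec.preimage (x.1 ≫ ψ)) := (Spec.map_preimage _).symm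
        replace hxr := (PrimeSpectrum.mem_basicOpen _ _).mp hxr
        apply IsLocalRing.notMem_maximalIdeal.mp
        intro hmax
        apply hxr
        conv_lhs => rw [hy]
        refine Ideal.mem_comap.mpr ?_
        exact hmax
    · rintro y ⟨hkill, r, hrG, hunity⟩
      set σ : A ⟶ CommRingCat.of R := Spec.preimage y.1 with hσ
      have hyσ : y.1 = Spec.map σ := (Spec.map_preimage y.1).symm
      -- all points of the section land in the zero locus of I
      have hzl : ∀ p, y.1.base p ∈ PrimeSpectrum.zeroLocus (I : Set ↑A) := by
        intro p
        refine (PrimeSpectrum.mem_zeroLocus _ _).mpr ?_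
        intro a ha
        have heq : y.1.base p = PrimeSpectrum.comap σ.hom p := by rw [hyσ]; rfl
        rw [heq]
        refine Ideal.mem_comap.mpr ?_
        have h0 : σ a = 0 := hkill a ha
        rw [h0]
        exact Ideal.zero_mem _
      -- the closed point lands in D(r)
      have hbo₀ : y.1.base (IsLocalRing.closedPoint ↥(CommRingCat.of R))
          ∈ PrimeSpectrum.basicOpen r := by
        refine (PrimeSpectrum.mem_basicOpen _ _).mpr ?_
        intro hmem
        have : y.1.base (IsLocalRing.closedPoint ↥(CommRingCat.of R))
            = PrimeSpectrum.comap σ.hom (IsLocalRing.closedPoint R) := by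
          rw [hyσ]; rfl
        rw [this, PrimeSpectrum.comap_asIdeal, Ideal.mem_comap] at hmem
        exact IsLocalRing.notMem_maximalIdeal.mpr hunity hmem
      -- all points land in D(r)
      have hbor : ∀ p, y.1.base p ∈ PrimeSpectrum.basicOpen r := fun p =>
        ((IsLocalRing.specializes_closedPoint p).map y.1.continuous).mem_open
          (PrimeSpectrum.basicOpen r).2 hbo₀
      -- hence all points land in the image of ψ
      have hrange : ∀ p, y.1.base p ∈ Set.range ψ.base := by
        intro p
        rw [hdecomp]
        exact ⟨hGsub r hrG (hbor p), hK1 ▸ hzl p⟩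
      -- the affine basic open
      set g' : ↑Γ(Spec A, ⊤) := (Scheme.ΓSpecIso A).inv r with hg'
      set BO : (Spec A).Opens := (Spec A).basicOpen g' with hBO
      have hBOeq : BO = PrimeSpectrum.basicOpen r := by
        rw [hBO, hg']; exact basicOpen_eq_of_affine r
      haveI hBOaff : IsAffine BO.toScheme := (isAffineOpen_top (Spec A)).basicOpen g'
      set κ : (ψ ⁻¹ᵁ BO).toScheme ⟶ BO.toScheme := ψ ∣_ BO with hκ
      haveI hκimm : IsImmersion κ := IsZariskiLocalAtTarget.restrict (P := @IsImmersion) inferInstance BO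
      haveI hκcl : IsClosedImmersion κ := by
        apply IsClosedImmersion.of_isPreimmersion
        have hbase : Set.range κ.base = Subtype.val ⁻¹' Set.range ψ.base := by
          rw [hκ, morphismRestrict_base]
          exact Set.range_restrictPreimage _ _
        rw [hbase]
        have heq : (Subtype.val ⁻¹' Set.range ψ.base : Set BO)
            = Subtype.val ⁻¹' PrimeSpectrum.zeroLocus (I : Set ↑A) := by
          ext x
          simp only [Set.mem_preimage]
          constructor
          · intro hmem
            rw [hdecomp] at hmem
            exact hK1 ▸ hmem.2
          · intro hmem
            rw [hdecomp]
            exact ⟨hGsub r hrG ((le_of_eq hBOeq) x.2), hK1.symm ▸ hmem⟩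
        change IsClosed (Subtype.val ⁻¹' Set.range ψ.base : Set BO); rw [heq]
        exact (PrimeSpectrum.isClosed_zeroLocus _).preimage continuous_subtype_val
      -- the section factors through BO
      have hsubBO : Set.range y.1.base ⊆ Set.range BO.ι.base := by
        rw [Scheme.Opens.range_ι]
        rintro _ ⟨p, rfl⟩
        rw [hBOeq]
        exact hbor p
      set y' : SpecR R ⟶ BO.toScheme := IsOpenImmersion.lift BO.ι y.1 hsubBO with hy'def
      have hy'fac : y' ≫ BO.ι = y.1 := IsOpenImmersion.lift_fac _ _ _
      -- kernel condition
      haveI := Γ_restrict_isLocalization (Spec A) g'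
      have hkercond : ∀ s : Γ(BO.toScheme, ⊤), κ.appTop s = 0 →
          (Scheme.ΓSpecIso (CommRingCat.of R)).hom (y'.appTop s) = 0 := by
        intro s hs
        obtain ⟨⟨b, ⟨_, n, rfl⟩⟩, hbm⟩ :=
          IsLocalization.surj (M := Submonoid.powers g') (S := ↑Γ(BO.toScheme, ⊤)) s
        -- `hbm : s * algebraMap _ _ (g' ^ n) = algebraMap _ _ b`
        have halg : ∀ z : ↑Γ(Spec A, ⊤),
            algebraMap ↑Γ(Spec A, ⊤) ↑Γ(BO.toScheme, ⊤) z = BO.ι.appTop z := fun z => rfl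
        -- push the relation to the closed subscheme
        have hcompκ : ∀ z : ↑Γ(Spec A, ⊤),
            κ.appTop (BO.ι.appTop z) = (ψ ⁻¹ᵁ BO).ι.appTop (ψ.appTop z) := by
          intro z
          have h1 : κ ≫ BO.ι = (ψ ⁻¹ᵁ BO).ι ≫ ψ := morphismRestrict_ι ψ BO
          have h2 : (κ ≫ BO.ι).appTop = ((ψ ⁻¹ᵁ BO).ι ≫ ψ).appTop := by rw [h1]
          rw [Scheme.Hom.comp_appTop, Scheme.Hom.comp_appTop] at h2
          calc κ.appTop (BO.ι.appTop z) = (BO.ι.appTop ≫ κ.appTop) z := rfl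
            _ = (ψ.appTop ≫ (ψ ⁻¹ᵁ BO).ι.appTop) z := by rw [h2]
            _ = (ψ ⁻¹ᵁ BO).ι.appTop (ψ.appTop z) := rfl
        have happ := congrArg (κ.appTop) hbm
        rw [map_mul, hs, zero_mul, halg, hcompκ] at happ
        -- relate the vanishing to a restriction on W
        have hpre : ψ ⁻¹ᵁ BO = W.basicOpen (ρ r) := by
          rw [hBO, Scheme.preimage_basicOpen]; rfl
        have htop : ∀ z : ↑Γ(W, ⊤),
            (ψ ⁻¹ᵁ BO).topIso.hom ((ψ ⁻¹ᵁ BO).ι.appTop z) = z |_ (ψ ⁻¹ᵁ BO) := by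
          intro z
          rw [Scheme.Opens.topIso_hom, Scheme.Opens.ι_appTop]
          erw [← CommRingCat.comp_apply, ← Functor.map_comp]
          rfl
        have hres0 : (ψ.appTop b) |_ W.basicOpen (ρ r) = 0 := by
          rw [← hpre]
          rw [← htop (ψ.appTop b), ← happ, map_zero]
        obtain ⟨m, hm⟩ := exists_of_res_zero_of_qcqs_of_top (X := W) hres0
        -- conclude `r ^ m * bA ∈ I`
        set bA : ↑A := (Scheme.ΓSpecIso A).hom b with hbA
        have hmem : r ^ m * bA ∈ I := by
          rw [hI, RingHom.mem_ker, map_mul, map_pow]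
          have hρb : ρ bA = ψ.appTop b := by
            rw [hρ, hbA]
            show ψ.appTop ((Scheme.ΓSpecIso A).inv ((Scheme.ΓSpecIso A).hom b)) = ψ.appTop b
            rw [Iso.hom_inv_id_apply]
          rw [hρb]
          exact hm
        have hσb : σ bA = 0 := by
          have h0 := hkill _ hmem
          show _ = (0 : R)
          have h1 : σ (r ^ m * bA) = 0 := h0
          rw [map_mul, map_pow] at h1
          exact ((hunity.pow m).mul_right_eq_zero).mp h1
        -- now evaluate the relation along y'
        have hyapp : ∀ z : ↑Γ(Spec A, ⊤),
            (Scheme.ΓSpecIso (CommRingCat.of R)).hom (y.1.appTop z)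
            = σ ((Scheme.ΓSpecIso A).hom z) := by
          intro z
          have hnat := Scheme.ΓSpecIso_naturality σ
          have := congrArg (fun (q : Γ(Spec A, ⊤) ⟶ CommRingCat.of R) => q z) hnat
          simp only at this
          calc (Scheme.ΓSpecIso (CommRingCat.of R)).hom (y.1.appTop z)
              = ((Spec.map σ).appTop ≫ (Scheme.ΓSpecIso (CommRingCat.of R)).hom) z := by
                rw [← hyσ]; rfl
            _ = ((Scheme.ΓSpecIso A).hom ≫ σ) z := by rw [hnat]
            _ = σ ((Scheme.ΓSpecIso A).hom z) := rfl
        have hy'app : ∀ z : ↑Γ(Spec A, ⊤), y'.appTop (BO.ι.appTop z) = y.1.appTop z := by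
          intro z
          have h2 : (y' ≫ BO.ι).appTop = y.1.appTop := by rw [hy'fac]
          rw [Scheme.Hom.comp_appTop] at h2
          calc y'.appTop (BO.ι.appTop z) = (BO.ι.appTop ≫ y'.appTop) z := rfl
            _ = y.1.appTop z := by rw [h2]
        have happy := congrArg (fun q => (Scheme.ΓSpecIso (CommRingCat.of R)).hom (y'.appTop q)) hbm
        simp only [map_mul] at happy
        rw [halg, halg, hy'app, hy'app, hyapp, hyapp] at happy
        rw [map_pow] at happy
        have hgr : (Scheme.ΓSpecIso A).hom g' = r := by rw [hg', Iso.inv_hom_id_apply]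
        rw [hgr, hσb, map_pow] at happy
        exact ((hunity.pow n).mul_left_eq_zero).mp happy
      obtain ⟨v, hv⟩ := exists_factor_closedImmersion κ y' hkercond
      have hxψ : (v ≫ (ψ ⁻¹ᵁ BO).ι) ≫ ψ = y.1 := by
        rw [Category.assoc, ← morphismRestrict_ι, ← hκ, ← Category.assoc, hv, hy'fac]
      refine ⟨⟨v ≫ (ψ ⁻¹ᵁ BO).ι, ?_⟩, Subtype.ext hxψ⟩
      rw [← wψ, ← Category.assoc, hxψ, y.2]
  rw [hmain]
  exact hSclosed

end Statement9Aux
/-- over a Hausdorff local topological ring `R` with `R^×` open, closed, and a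
topological group in the subspace topology, every quasi-compact immersion of locally of
finite type `R`-schemes induces a closed topological embedding on `R`-points. -/
theorem statement_9 (R : Type) [CommRing R] [TopologicalSpace R] [IsTopologicalRing R]
    [IsLocalRing R] [T2Space R]
    (hunit : IsOpen {x : R | IsUnit x})
    (hinv : ContinuousOn (fun x : R => Ring.inverse x) {x : R | IsUnit x})
    (hclosed : IsClosed {x : R | IsUnit x})
    (T : PointsTopology R)
    {X Y : Scheme} {f : X ⟶ SpecR R} {g : Y ⟶ SpecR R}
    (hf : LocallyOfFiniteType f) (hg : LocallyOfFiniteType g)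
    (φ : X ⟶ Y) (w : φ ≫ g = f) [IsImmersion φ] [QuasiCompact φ] :
    letI := T.top f hf
    letI := T.top g hg
    IsClosedEmbedding (Pts.map φ w) := by
  letI := T.top f hf
  letI := T.top g hg
  haveI := hf
  haveI := hg
  haveI : IsLocalRing ↥(CommRingCat.of R) := inferInstanceAs (IsLocalRing R)
  constructor
  · -- the embedding part, via the coborder factorization
    have wc : φ.liftCoborder ≫ (φ.coborderRange.ι ≫ g) = f := by
      rw [← Category.assoc, Scheme.Hom.liftCoborder_ι, w]
    haveI hsU : LocallyOfFiniteType (φ.coborderRange.ι ≫ g) := inferInstance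
    letI := T.top (φ.coborderRange.ι ≫ g) hsU
    have hembc := T.closedImmersion_isEmbedding hf hsU φ.liftCoborder wc inferInstance
    have hembo := T.openImmersion_isOpenEmbedding hsU hg φ.coborderRange.ι rfl inferInstance
    have hcomp : Pts.map φ w
        = (Pts.map φ.coborderRange.ι rfl) ∘ (Pts.map φ.liftCoborder wc) := by
      funext s
      exact (pts_map_map (Scheme.Hom.liftCoborder_ι φ) wc rfl w s).symm
    rw [hcomp]
    exact hembo.toIsEmbedding.comp hembc
  · -- the closedness of the image
    rw [← isOpen_compl_iff, isOpen_iff_forall_mem_open]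
    intro y hy
    obtain ⟨V0, hVaff, hpt0, -⟩ := TopologicalSpace.Opens.isBasis_iff_nbhd.mp
      Y.isBasis_affineOpens
      (show y.1.base (IsLocalRing.closedPoint ↥(CommRingCat.of R)) ∈ ⊤ from trivial)
    set V : Y.Opens := V0 with hVdef
    have hpt : y.1.base (IsLocalRing.closedPoint ↥(CommRingCat.of R)) ∈ V := hpt0
    haveI : IsAffine V.toScheme := hVaff
    haveI hsV : LocallyOfFiniteType (V.ι ≫ g) := inferInstance
    letI := T.top (V.ι ≫ g) hsV
    have hOE := T.openImmersion_isOpenEmbedding hsV hg V.ι rfl inferInstance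
    have hyrange : Set.range y.1.base ⊆ Set.range V.ι.base := by
      rw [Scheme.Opens.range_ι]
      rintro _ ⟨p, rfl⟩
      exact ((IsLocalRing.specializes_closedPoint p).map y.1.continuous).mem_open
        V.2 hpt
    set ylift : Pts (V.ι ≫ g) := ⟨IsOpenImmersion.lift V.ι y.1 hyrange, by
      rw [← Category.assoc, IsOpenImmersion.lift_fac, y.2]⟩ with hylift
    have hylift_eq : Pts.map V.ι rfl ylift = y := Subtype.ext (IsOpenImmersion.lift_fac _ _ _)
    haveI : IsImmersion (φ ∣_ V) := IsZariskiLocalAtTarget.restrict (P := @IsImmersion) inferInstance V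
    haveI : QuasiCompact (φ ∣_ V) := inferInstance
    set ψ : (φ ⁻¹ᵁ V).toScheme ⟶ Spec Γ(V.toScheme, ⊤) :=
      (φ ∣_ V) ≫ V.toScheme.isoSpec.hom with hψdef
    haveI : IsImmersion ψ := inferInstance
    haveI : QuasiCompact ψ := inferInstance
    haveI hsW' : LocallyOfFiniteType ((φ ⁻¹ᵁ V).ι ≫ f) := inferInstance
    haveI hsA : LocallyOfFiniteType (V.toScheme.isoSpec.inv ≫ V.ι ≫ g) := inferInstance
    letI := T.top ((φ ⁻¹ᵁ V).ι ≫ f) hsW'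
    letI := T.top (V.toScheme.isoSpec.inv ≫ V.ι ≫ g) hsA
    have wψ : ψ ≫ (V.toScheme.isoSpec.inv ≫ V.ι ≫ g) = (φ ⁻¹ᵁ V).ι ≫ f := by
      rw [hψdef, Category.assoc, Iso.hom_inv_id_assoc, ← Category.assoc, morphismRestrict_ι,
        Category.assoc, w]
    have hCS := closed_range_spec hclosed T ψ hsW' hsA wψ
    have wiso : V.toScheme.isoSpec.hom ≫ (V.toScheme.isoSpec.inv ≫ V.ι ≫ g) = V.ι ≫ g :=
      Iso.hom_inv_id_assoc _ _
    have hpre_eq : (Pts.map V.ι rfl) ⁻¹' (Set.range (Pts.map φ w))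
        = (Pts.map V.toScheme.isoSpec.hom wiso) ⁻¹' (Set.range (Pts.map ψ wψ)) := by
      ext s
      simp only [Set.mem_preimage, Set.mem_range]
      constructor
      · rintro ⟨x, hx⟩
        have hval : x.1 ≫ φ = s.1 ≫ V.ι := congrArg Subtype.val hx
        have hxr : Set.range x.1.base ⊆ Set.range (φ ⁻¹ᵁ V).ι.base := by
          rw [Scheme.Opens.range_ι]
          rintro _ ⟨p, rfl⟩
          show φ.base (x.1.base p) ∈ V
          rw [← Scheme.Hom.comp_apply, hval, Scheme.Hom.comp_apply]
          have hmem : V.ι.base (s.1.base p) ∈ Set.range V.ι.base := ⟨s.1.base p, rfl⟩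
          rwa [Scheme.Opens.range_ι] at hmem
        refine ⟨⟨IsOpenImmersion.lift (φ ⁻¹ᵁ V).ι x.1 hxr, by
          rw [← Category.assoc, IsOpenImmersion.lift_fac, x.2]⟩, Subtype.ext ?_⟩
        show IsOpenImmersion.lift (φ ⁻¹ᵁ V).ι x.1 hxr ≫ ψ = s.1 ≫ V.toScheme.isoSpec.hom
        rw [hψdef, ← Category.assoc]
        congr 1
        rw [← cancel_mono V.ι, Category.assoc, morphismRestrict_ι, ← Category.assoc,
          IsOpenImmersion.lift_fac, hval]
      · rintro ⟨x', hx'⟩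
        have hval : x'.1 ≫ ψ = s.1 ≫ V.toScheme.isoSpec.hom := congrArg Subtype.val hx'
        have hres : x'.1 ≫ (φ ∣_ V) = s.1 := by
          rw [hψdef, ← Category.assoc] at hval
          exact (cancel_mono _).mp hval
        refine ⟨⟨x'.1 ≫ (φ ⁻¹ᵁ V).ι, by rw [Category.assoc]; exact x'.2⟩, Subtype.ext ?_⟩
        show (x'.1 ≫ (φ ⁻¹ᵁ V).ι) ≫ φ = s.1 ≫ V.ι
        rw [Category.assoc, ← morphismRestrict_ι, ← Category.assoc, hres]
    have hclosed_pre : IsClosed ((Pts.map V.ι rfl) ⁻¹' (Set.range (Pts.map φ w))) := by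
      rw [hpre_eq]
      exact hCS.preimage (T.continuous_map hsV hsA V.toScheme.isoSpec.hom wiso)
    refine ⟨(Pts.map V.ι rfl) '' (((Pts.map V.ι rfl) ⁻¹' (Set.range (Pts.map φ w)))ᶜ),
      ?_, ?_, ?_⟩
    · rintro _ ⟨s, hs, rfl⟩
      exact hs
    · exact hOE.isOpenMap _ hclosed_pre.isOpen_compl
    · exact ⟨ylift, fun hmem => hy (hylift_eq ▸ hmem), hylift_eq⟩

end
end

section
/- Let R be a Hausdorff local topological ring in which R^× is open in R, is a topological group in its subspace topology, and is closed in R (e.g., R a valuation ring with its valuation topology), and fix a topologization of rational points over R. Then for every quasi-separated, locally of finite type R-scheme X, the topological space X(R) is Hausdorff. -/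
open AlgebraicGeometry CategoryTheory CategoryTheory.Limits Topology

noncomputable section

section Aux
variable {R : Type} [CommRing R]

lemma algMap_ft (R S : Type) [CommRing R] [CommRing S] [Algebra R S] [h : Algebra.FiniteType R S] :
    RingHom.FiniteType (algebraMap R S) := by
  rw [RingHom.FiniteType]
  rw [show (algebraMap R S).toAlgebra = ‹Algebra R S› from Algebra.algebra_ext _ _ fun r => rfl]
  exact h

lemma lftAffineN (R : Type) [CommRing R] (n : ℕ) : LocallyOfFiniteType (AffineNStr R n) := by
  rw [AffineNStr, HasRingHomProperty.Spec_iff (P := @LocallyOfFiniteType)]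
  exact algMap_ft R (MvPolynomial (Fin n) R)

/-- L2 : affine pieces have Hausdorff point spaces. -/
lemma t2_affine [TopologicalSpace R] [T2Space R] (T : PointsTopology R)
    {Y : Scheme} [IsAffine Y] (h : Y ⟶ SpecR R) (hft : LocallyOfFiniteType h) :
    @T2Space (Pts h) (T.top h hft) := by
  have hQ : RingHom.FiniteType (Scheme.Hom.appTop h).hom :=
    (HasRingHomProperty.iff_of_isAffine (P := @LocallyOfFiniteType) (f := h)).mp hft
  have hiso : RingHom.FiniteType ((Scheme.ΓSpecIso (CommRingCat.of R)).inv.hom) :=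
    RingHom.FiniteType.of_surjective _
      (ConcreteCategory.bijective_of_isIso (Scheme.ΓSpecIso (CommRingCat.of R)).inv).2
  have hβ : RingHom.FiniteType
      ((Scheme.Hom.appTop h).hom.comp ((Scheme.ΓSpecIso (CommRingCat.of R)).inv.hom)) :=
    hQ.comp hiso
  letI : Algebra R Γ(Y, ⊤) :=
    ((Scheme.Hom.appTop h).hom.comp ((Scheme.ΓSpecIso (CommRingCat.of R)).inv.hom)).toAlgebra
  have hA : Algebra.FiniteType R Γ(Y, ⊤) := hβ
  obtain ⟨n, φ, hφ⟩ := Algebra.FiniteType.iff_quotient_mvPolynomial''.mp hA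
  let g : Y ⟶ AffineN R n := Y.isoSpec.hom ≫ Spec.map (CommRingCat.ofHom φ.toRingHom)
  have hgci : IsClosedImmersion g := by
    have : IsClosedImmersion (Spec.map (CommRingCat.ofHom φ.toRingHom)) :=
      IsClosedImmersion.spec_of_surjective _ hφ
    exact IsClosedImmersion.comp _ _
  have w : g ≫ AffineNStr R n = h := by
    rw [AffineNStr]
    rw [Category.assoc, ← Spec.map_comp]
    have hc : (CommRingCat.ofHom (algebraMap R (MvPolynomial (Fin n) R)) ≫
        CommRingCat.ofHom φ.toRingHom)
        = (Scheme.ΓSpecIso (CommRingCat.of R)).inv ≫ Scheme.Hom.appTop h := by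
      exact CommRingCat.hom_ext (RingHom.ext fun r => φ.commutes r)
    rw [hc, Spec.map_comp, Scheme.isoSpec_hom_naturality_assoc h, Scheme.isoSpec_Spec_hom,
      ← Spec.map_comp, Iso.inv_hom_id, Spec.map_id, Category.comp_id]
  letI t1 := T.top h hft
  letI t2 := T.top (AffineNStr R n) (lftAffineN R n)
  have emb : IsEmbedding (Pts.map g w) :=
    T.closedImmersion_isEmbedding hft (lftAffineN R n) g w hgci
  have hh : IsHomeomorph (affineCoords R n) := T.affine_homeo n (lftAffineN R n)
  exact ((hh.isEmbedding).comp emb).t2Space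

end Aux

section Aux2
variable {R : Type} [CommRing R] [IsLocalRing R]

instance : IsLocalRing (CommRingCat.of R) := ‹IsLocalRing R›

/-- The closed point of `Spec R`. -/
def mpt (R : Type) [CommRing R] [IsLocalRing R] : SpecR R := IsLocalRing.closedPoint R

lemma unit_iff {B : CommRingCat} (q : SpecR R ⟶ Spec B) (b : B) :
    b ∉ (q.base (mpt R)).asIdeal ↔ IsUnit (Spec.preimage q b) := by
  conv_lhs => rw [← Spec.map_preimage q]
  rw [Spec.map_apply]
  change b ∉ Ideal.comap (Spec.preimage q).hom (IsLocalRing.maximalIdeal R) ↔ _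
  rw [Ideal.mem_comap]
  exact IsLocalRing.notMem_maximalIdeal

/-- Evaluation of a global function at sections is continuous. -/
lemma ev_cont [TopologicalSpace R] (T : PointsTopology R) {B : CommRingCat}
    (h' : Spec B ⟶ SpecR R) (hft' : LocallyOfFiniteType h') (b : B) :
    @Continuous _ _ (T.top h' hft') _ (fun t : Pts h' => (Spec.preimage t.1) b) := by
  letI := T.top h' hft'
  letI := T.top (AffineNStr R 1) (lftAffineN R 1)
  set ψ : MvPolynomial (Fin 1) R →+* B :=
    MvPolynomial.eval₂Hom (Spec.preimage h').hom (fun _ => b) with hψ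
  have w : Spec.map (CommRingCat.ofHom ψ) ≫ AffineNStr R 1 = h' := by
    rw [AffineNStr, ← Spec.map_comp,
      show CommRingCat.ofHom (algebraMap R (MvPolynomial (Fin 1) R)) ≫ CommRingCat.ofHom ψ
        = Spec.preimage h' from CommRingCat.hom_ext <| RingHom.ext fun r => by
          simp [ψ, MvPolynomial.algebraMap_eq], Spec.map_preimage]
  have key : (fun t : Pts h' => (Spec.preimage t.1) b)
      = (fun v => v 0) ∘ affineCoords R 1 ∘ Pts.map (Spec.map (CommRingCat.ofHom ψ)) w := by
    funext t
    show _ = affineCoords R 1 (Pts.map _ w t) 0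
    rw [affineCoords, Pts.map]
    show _ = Spec.preimage (t.1 ≫ Spec.map (CommRingCat.ofHom ψ)) (MvPolynomial.X 0)
    rw [show t.1 ≫ Spec.map (CommRingCat.ofHom ψ)
        = Spec.map (CommRingCat.ofHom ψ ≫ Spec.preimage t.1) by
          rw [Spec.map_comp, Spec.map_preimage], Spec.preimage_map]
    show _ = (Spec.preimage t.1) (ψ (MvPolynomial.X 0))
    rw [hψ, MvPolynomial.eval₂Hom_X']
  rw [key]
  exact (continuous_apply 0).comp
    (((T.affine_homeo 1 (lftAffineN R 1)).continuous).comp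
      (T.continuous_map hft' (lftAffineN R 1) _ w))

/-- L3: closedness of the locus of sections whose closed point lands in a
quasi-compact open. -/
lemma closed_pred [TopologicalSpace R] (hclosed : IsClosed {x : R | IsUnit x})
    (T : PointsTopology R) {B : CommRingCat}
    (h' : Spec B ⟶ SpecR R) (hft' : LocallyOfFiniteType h')
    {W : Set (PrimeSpectrum B)} (hWo : IsOpen W) (hWc : IsCompact W) :
    @IsClosed (Pts h') (T.top h' hft') {t : Pts h' | t.1.base (mpt R) ∈ W} := by
  letI := T.top h' hft'
  obtain ⟨tf, htf⟩ := PrimeSpectrum.isCompact_isOpen_iff.mp ⟨hWc, hWo⟩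
  have : {t : Pts h' | t.1.base (mpt R) ∈ W}
      = ⋃ b ∈ tf, (fun t : Pts h' => (Spec.preimage t.1) b) ⁻¹' {x : R | IsUnit x} := by
    ext t
    simp only [Set.mem_setOf_eq, Set.mem_iUnion, Set.mem_preimage, ← htf, Set.mem_compl_iff,
      PrimeSpectrum.mem_zeroLocus]
    change ¬ ((tf : Set B) ⊆ (t.1.base (mpt R)).asIdeal) ↔ _
    rw [Set.not_subset]
    constructor
    · rintro ⟨b, hb, hnb⟩; exact ⟨b, hb, (unit_iff t.1 b).mp hnb⟩
    · rintro ⟨b, hb, hub⟩; exact ⟨b, hb, (unit_iff t.1 b).mpr hub⟩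
  rw [this]
  exact isClosed_biUnion_finset fun b _ => (hclosed.preimage (ev_cont T h' hft' b))
end Aux2

section Aux3
variable {R : Type} [CommRing R] [IsLocalRing R]

lemma range_sub {X : Scheme} (s : SpecR R ⟶ X) {U : Set X} (hU : IsOpen U)
    (hm : s.base (mpt R) ∈ U) : Set.range s.base ⊆ U := by
  rintro _ ⟨y, rfl⟩
  exact ((IsLocalRing.specializes_closedPoint y).map s.continuous).mem_open hU hm

lemma factor_section {X Y : Scheme} (f : X ⟶ SpecR R) (g : Y ⟶ X) [IsOpenImmersion g]
    (s : Pts f) (hm : s.1.base (mpt R) ∈ Set.range g.base) :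
    ∃ t : Pts (g ≫ f), Pts.map g rfl t = s := by
  have hsub : Set.range s.1.base ⊆ Set.range g.base :=
    range_sub s.1 g.isOpenEmbedding.isOpen_range hm
  refine ⟨⟨IsOpenImmersion.lift g s.1 hsub, ?_⟩,
    Subtype.ext (IsOpenImmersion.lift_fac g s.1 hsub)⟩
  rw [← Category.assoc, IsOpenImmersion.lift_fac, s.2]

end Aux3

/-- over a Hausdorff local topological ring `R` with `R^×` open, closed, and a
topological group in the subspace topology, for every quasi-separated locally of finite type
`R`-scheme `X`, the space `X(R)` is Hausdorff. -/
theorem statement_14 (R : Type) [CommRing R] [TopologicalSpace R] [IsTopologicalRing R]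
    [IsLocalRing R] [T2Space R]
    (hunit : IsOpen {x : R | IsUnit x})
    (hinv : ContinuousOn (fun x : R => Ring.inverse x) {x : R | IsUnit x})
    (hclosed : IsClosed {x : R | IsUnit x})
    (T : PointsTopology R)
    {X : Scheme} (f : X ⟶ SpecR R) (hf : LocallyOfFiniteType f) [QuasiSeparated f] :
    letI := T.top f hf
    T2Space (Pts f) := by
  letI := T.top f hf
  haveI := hf
  refine ⟨fun s t hst => ?_⟩
  set m : SpecR R := mpt R with hmdef
  set iidx := X.affineCover.idx (s.1.base m) with hidef
  set g : X.affineCover.X iidx ⟶ X := X.affineCover.f iidx with hgdef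
  have hs : s.1.base m ∈ Set.range g.base := X.affineCover.covers _
  haveI : LocallyOfFiniteType (g ≫ f) := inferInstance
  letI := T.top (g ≫ f) inferInstance
  have hoe : IsOpenEmbedding (Pts.map g rfl : Pts (g ≫ f) → Pts f) :=
    T.openImmersion_isOpenEmbedding inferInstance hf g rfl inferInstance
  by_cases ht : t.1.base m ∈ Set.range g.base
  · -- both in the same affine chart
    obtain ⟨s', hs'⟩ := factor_section f g s hs
    obtain ⟨t', ht'⟩ := factor_section f g t ht
    have hT2 : T2Space (Pts (g ≫ f)) := t2_affine T (g ≫ f) inferInstance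
    have hne : s' ≠ t' := fun e => hst (by rw [← hs', ← ht', e])
    obtain ⟨u, v, hu, hv, hsu, htv, huv⟩ := t2_separation hne
    exact ⟨Pts.map g rfl '' u, Pts.map g rfl '' v, hoe.isOpenMap _ hu, hoe.isOpenMap _ hv,
      hs' ▸ Set.mem_image_of_mem _ hsu, ht' ▸ Set.mem_image_of_mem _ htv,
      Set.disjoint_image_of_injective hoe.injective huv⟩
  · -- t in another chart
    set jidx := X.affineCover.idx (t.1.base m) with hjdef
    set g' : X.affineCover.X jidx ⟶ X := X.affineCover.f jidx with hg'def
    have ht2 : t.1.base m ∈ Set.range g'.base := X.affineCover.covers _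
    obtain ⟨t', ht'⟩ := factor_section f g' t ht2
    haveI : LocallyOfFiniteType (g' ≫ f) := inferInstance
    letI := T.top (g' ≫ f) inferInstance
    have hoe' : IsOpenEmbedding (Pts.map g' rfl : Pts (g' ≫ f) → Pts f) :=
      T.openImmersion_isOpenEmbedding inferInstance hf g' rfl inferInstance
    haveI : QuasiSeparatedSpace X := quasiSeparatedSpace_of_quasiSeparated f
    haveI : CompactSpace ↑(X.affineCover.X iidx) := by
      show CompactSpace (PrimeSpectrum _); infer_instance
    haveI : CompactSpace ↑(X.affineCover.X jidx) := by
      show CompactSpace (PrimeSpectrum _); infer_instance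
    have hK : IsCompact (Set.range g.base ∩ Set.range g'.base) :=
      QuasiSeparatedSpace.inter_isCompact _ _ g.isOpenEmbedding.isOpen_range
        (isCompact_range g.continuous) g'.isOpenEmbedding.isOpen_range (isCompact_range g'.continuous)
    have hWeq : g'.base ⁻¹' (Set.range g.base)
        = g'.base ⁻¹' (Set.range g.base ∩ Set.range g'.base) := by
      ext x
      simp only [Set.mem_preimage, Set.mem_inter_iff, Set.mem_range]
      exact ⟨fun h => ⟨h, x, rfl⟩, fun h => h.1⟩
    have hWc : IsCompact (g'.base ⁻¹' (Set.range g.base)) := by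
      rw [hWeq]
      exact g'.isOpenEmbedding.toIsInducing.isCompact_preimage' hK Set.inter_subset_right
    have hWo : IsOpen (g'.base ⁻¹' (Set.range g.base)) :=
      g.isOpenEmbedding.isOpen_range.preimage g'.continuous
    have hC : IsClosed {u : Pts (g' ≫ f) | u.1.base m ∈ g'.base ⁻¹' (Set.range g.base)} :=
      closed_pred hclosed T (g' ≫ f) (inferInstance : LocallyOfFiniteType (g' ≫ f)) hWo hWc
    refine ⟨Set.range (Pts.map g rfl),
      Pts.map g' rfl '' {u : Pts (g' ≫ f) | u.1.base m ∈ g'.base ⁻¹' (Set.range g.base)}ᶜ,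
      hoe.isOpen_range, hoe'.isOpenMap _ hC.isOpen_compl,
      factor_section f g s hs, ?_, ?_⟩
    · refine ⟨t', fun hmem => ht ?_, ht'⟩
      have : (Pts.map g' rfl t').1.base m = g'.base (t'.1.base m) :=
        Scheme.Hom.comp_apply t'.1 g' m
      rw [ht'] at this
      rw [this]
      exact hmem
    · rw [Set.disjoint_left]
      rintro x ⟨v, rfl⟩ ⟨u, hu, hx⟩
      apply hu
      show u.1.base m ∈ g'.base ⁻¹' (Set.range g.base)
      have e : u.1 ≫ g' = v.1 ≫ g := congrArg Subtype.val hx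
      have e2 : g'.base (u.1.base m) = g.base (v.1.base m) := by
        exact congrArg (fun φ : SpecR R ⟶ X => φ.base m) e
      exact Set.mem_preimage.mpr (e2 ▸ Set.mem_range_self _)

end
end

section
/- Let R be a local topological ring in which R^× is open and is a topological group in its subspace topology, and fix a topologization of rational points over R. If for every étale morphism f : X → Y between affine finite type R-schemes the induced map f(R) : X(R) → Y(R) is open, then R is étale-open: for every étale morphism f : X → Y of locally of finite type R-schemes, f(R) is open. -/
open AlgebraicGeometry CategoryTheory CategoryTheory.Limits Topology

noncomputable section

/-- Composition law for `Pts.map`. -/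
lemma Pts.map_map {R : Type} [CommRing R] {X X' X'' : Scheme} {f : X ⟶ SpecR R}
    {f' : X' ⟶ SpecR R} {f'' : X'' ⟶ SpecR R} (g : X ⟶ X') (w : g ≫ f' = f)
    (g' : X' ⟶ X'') (w' : g' ≫ f'' = f') (s : Pts f) :
    Pts.map g' w' (Pts.map g w s) = Pts.map (g ≫ g') (by rw [Category.assoc, w', w]) s := by
  apply Subtype.ext
  simp [Pts.map, Category.assoc]

/-- if every étale morphism between affine finite type `R`-schemes induces an
open map on `R`-points, then `R` is étale-open (étale morphisms of arbitrary locally of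
finite type `R`-schemes induce open maps on `R`-points). -/
theorem statement_17 (R : Type) [CommRing R] [TopologicalSpace R] [IsTopologicalRing R]
    [IsLocalRing R]
    (hunit : IsOpen {x : R | IsUnit x})
    (hinv : ContinuousOn (fun x : R => Ring.inverse x) {x : R | IsUnit x})
    (T : PointsTopology R)
    (haff : ∀ {X Y : Scheme} {f : X ⟶ SpecR R} {g : Y ⟶ SpecR R}
      (hf : LocallyOfFiniteType f) (hg : LocallyOfFiniteType g),
      IsAffine X → IsAffine Y →
      ∀ (φ : X ⟶ Y) (w : φ ≫ g = f), IsEtale φ →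
      letI := T.top f hf
      letI := T.top g hg
      IsOpenMap (Pts.map φ w)) :
    EtaleOpen T := by
  intro X Y f g hf hg φ w hφ
  haveI := hf; haveI := hg; haveI := hφ
  haveI : IsLocalRing ↑(CommRingCat.of R) := ‹IsLocalRing R›
  letI tX := T.top f hf
  letI tY := T.top g hg
  intro S hS
  rw [isOpen_iff_forall_mem_open]
  rintro t ⟨s, hsS, rfl⟩
  -- the closed point image
  set x₀ := s.1.base (IsLocalRing.closedPoint R) with hx₀def
  set y₀ := φ.base x₀ with hy₀def
  -- affine open neighbourhood of y₀ in Y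
  set V := Y.affineCover.X (Y.affineCover.idx y₀) with hVdef
  set jV : V ⟶ Y := Y.affineCover.f (Y.affineCover.idx y₀) with hjVdef
  haveI : IsOpenImmersion jV := Y.affineCover.map_prop _
  have hy₀ : y₀ ∈ Set.range jV.base := Y.affineCover.covers y₀
  -- the preimage of V in X, as a pullback
  set P := pullback φ jV with hPdef
  have hx₀P : x₀ ∈ Set.range (pullback.fst φ jV).base := by
    rw [IsOpenImmersion.range_pullbackFst]
    exact hy₀
  obtain ⟨p, hp⟩ := hx₀P
  -- affine open neighbourhood of p in P
  set U := P.affineCover.X (P.affineCover.idx p) with hUdef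
  set jU : U ⟶ P := P.affineCover.f (P.affineCover.idx p) with hjUdef
  haveI : IsOpenImmersion jU := P.affineCover.map_prop _
  obtain ⟨q, hq⟩ := P.affineCover.covers p
  set u : U ⟶ X := jU ≫ pullback.fst φ jV with hudef
  set ψ : U ⟶ V := jU ≫ pullback.snd φ jV with hψdef
  haveI : IsOpenImmersion u := inferInstance
  have hψet : IsEtale ψ := by
    haveI : Etale φ := hφ
    haveI : Etale (pullback.snd φ jV) :=
      inferInstance
    exact (inferInstance : Etale ψ)
  have hcomm : ψ ≫ jV = u ≫ φ := by
    rw [hψdef, hudef, Category.assoc, Category.assoc, pullback.condition]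
  -- the section s factors through U
  have hx₀U : x₀ ∈ Set.range u.base := by
    refine ⟨q, ?_⟩
    rw [hudef]
    simp only [Scheme.Hom.comp_apply]
    rw [hq, hp]
  have hrange : Set.range s.1.base ⊆ Set.range u.base := by
    rintro _ ⟨x, rfl⟩
    have hspec : s.1.base x ⤳ x₀ :=
      (IsLocalRing.specializes_closedPoint x).map s.1.base.hom.2
    exact hspec.mem_open ((inferInstance : IsOpenImmersion u).base_open.isOpen_range) hx₀U
  set l : SpecR R ⟶ U := IsOpenImmersion.lift u s.1 hrange with hldef
  have hl : l ≫ u = s.1 := IsOpenImmersion.lift_fac u s.1 hrange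
  -- finite type structure morphisms
  have hfU : LocallyOfFiniteType (u ≫ f) := inferInstance
  have hgV : LocallyOfFiniteType (jV ≫ g) := inferInstance
  letI tU := T.top (u ≫ f) hfU
  letI tV := T.top (jV ≫ g) hgV
  set eU : Pts (u ≫ f) → Pts f := Pts.map u rfl with heUdef
  set eV : Pts (jV ≫ g) → Pts g := Pts.map jV rfl with heVdef
  have wψ : ψ ≫ jV ≫ g = u ≫ f := by
    rw [← Category.assoc, hcomm, Category.assoc, w]
  have heU : IsOpenEmbedding eU :=
    T.openImmersion_isOpenEmbedding hfU hf u rfl inferInstance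
  have heV : IsOpenEmbedding eV :=
    T.openImmersion_isOpenEmbedding hgV hg jV rfl inferInstance
  have hm : IsOpenMap (Pts.map ψ wψ) :=
    haff hfU hgV inferInstance inferInstance ψ wψ hψet
  -- the commuting square
  have hsquare : ∀ t : Pts (u ≫ f), eV (Pts.map ψ wψ t) = Pts.map φ w (eU t) := by
    intro t
    rw [heUdef, heVdef, Pts.map_map, Pts.map_map]
    apply Subtype.ext
    show t.1 ≫ ψ ≫ jV = t.1 ≫ u ≫ φ
    rw [hcomm]
  -- the section over U
  set sU : Pts (u ≫ f) := ⟨l, by rw [← Category.assoc, hl, s.2]⟩ with hsUdef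
  have heUsU : eU sU = s := by
    apply Subtype.ext
    show l ≫ u = s.1
    exact hl
  refine ⟨eV '' (Pts.map ψ wψ '' (eU ⁻¹' S)), ?_, ?_, ?_⟩
  · rintro _ ⟨_, ⟨t₀, ht₀, rfl⟩, rfl⟩
    exact ⟨eU t₀, ht₀, (hsquare t₀).symm⟩
  · exact heV.isOpenMap _ (hm _ (hS.preimage heU.continuous))
  · refine ⟨Pts.map ψ wψ sU, ⟨sU, ?_, rfl⟩, ?_⟩
    · show eU sU ∈ S
      rw [heUsU]; exact hsS
    · rw [hsquare sU, heUsU]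


end
end
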